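/- arXiv:2112.12512 — 5 statements merged into one kernel-verified Lean document; each statement's English description precedes it below -/
import Mathlib

section
/- Let G be a graph with maximum degree Δ and let v be a vertex of G such that in G − v every pair of neighbors of v is at distance at most 2, and v has at most 2Δ + 6 vertices at distance at most 2 in G. If G − v admits a proper coloring of its square with 2Δ + 7 colors, then G admits a proper coloring of its square with 2Δ + 7 colors. -/
open SimpleGraph

/-- The square of a graph `G`: two distinct vertices are adjacent iff they are at
distance at most 2 in `G`. -/
def SimpleGraph.square {V : Type*} (G : SimpleGraph V) : SimpleGraph V where
  Adj u v := u ≠ v ∧ (G.Adj u v ∨ ∃ w, G.Adj u w ∧ G.Adj w v)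
  symm := ⟨fun u v ⟨h1, h2⟩ => ⟨h1.symm, h2.elim (fun h => Or.inl h.symm)
    (fun ⟨w, h3, h4⟩ => Or.inr ⟨w, h4.symm, h3.symm⟩)⟩⟩
  loopless := ⟨fun _ h => h.1 rfl⟩

/-- The 2-chromatic number of a graph: the chromatic number of its square. -/
noncomputable def chi2 {V : Type*} (G : SimpleGraph V) : ℕ∞ :=
  G.square.chromaticNumber

/-- The degree of a vertex, as a cardinality (instance-free). -/
noncomputable def degN {V : Type*} (G : SimpleGraph V) (v : V) : ℕ :=
  Nat.card {u // G.Adj v u}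

/-- `G` has maximum degree `Δ`. -/
def maxDegIs {V : Type*} (G : SimpleGraph V) (Δ : ℕ) : Prop :=
  (∀ v, degN G v ≤ Δ) ∧ ∃ v, degN G v = Δ

/-- Let `v` be a vertex of `G` (of maximum degree `Δ`) such that in `G − v` every pair
of neighbors of `v` is at distance at most 2, and `v` has at most `2Δ + 6` vertices at
distance at most 2 in `G`. If `G − v` admits a proper coloring of its square with
`2Δ + 7` colors, then so does `G`. -/
theorem stmt7 {V : Type*} (G : SimpleGraph V) (Δ : ℕ) (hdeg : maxDegIs G Δ) (v : V)
    (hnbr : ∀ x y : {u // u ≠ v}, G.Adj v x.1 → G.Adj v y.1 → x ≠ y →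
      (G.induce {u | u ≠ v}).square.Adj x y)
    (hfew : Nat.card {u // u ≠ v ∧ (G.Adj v u ∨ ∃ w, G.Adj v w ∧ G.Adj w u)} ≤ 2 * Δ + 6)
    (hcol : (G.induce {u | u ≠ v}).square.Colorable (2 * Δ + 7)) :
    G.square.Colorable (2 * Δ + 7) := by
  classical
  obtain ⟨c⟩ := hcol
  set H := (G.induce {u | u ≠ v}) with hH
  set S : Set V := {u | u ≠ v ∧ (G.Adj v u ∨ ∃ w, G.Adj v w ∧ G.Adj w u)} with hS
  -- the set of neighbors of v
  set N : Set V := {u | G.Adj v u} with hN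
  have hNne : ∀ u ∈ N, u ≠ v := fun u hu => (G.ne_of_adj hu).symm
  -- neighbors of v form a "clique" in H.square, so c is injective on it
  have hNfin : N.Finite := by
    have : Set.InjOn (fun u => if h : u = v then (0 : Fin (2 * Δ + 7)) else c ⟨u, h⟩) N := by
      intro x hx y hy hxy
      by_contra hne
      have hx' : x ≠ v := hNne x hx
      have hy' : y ≠ v := hNne y hy
      simp only [dif_neg hx', dif_neg hy'] at hxy
      exact c.valid (hnbr ⟨x, hx'⟩ ⟨y, hy'⟩ hx hy
        (fun h => hne (congrArg Subtype.val h))) hxy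
    exact Set.Finite.of_finite_image (Set.toFinite _) this
  -- for each neighbor w of v, the set of its neighbors (≠ v) is finite
  have hMfin : ∀ w ∈ N, ({u | u ≠ v ∧ G.Adj w u} : Set V).Finite := by
    intro w hw
    have hw' : w ≠ v := hNne w hw
    have : Set.InjOn (fun u => if h : u = v then (0 : Fin (2 * Δ + 7)) else c ⟨u, h⟩)
        {u | u ≠ v ∧ G.Adj w u} := by
      intro x hx y hy hxy
      by_contra hne
      simp only [dif_neg hx.1, dif_neg hy.1] at hxy
      refine c.valid ?_ hxy
      refine ⟨fun h => hne (congrArg Subtype.val h), Or.inr ⟨⟨w, hw'⟩, ?_, ?_⟩⟩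
      · exact hx.2.symm
      · exact hy.2
    exact Set.Finite.of_finite_image (Set.toFinite _) this
  -- hence S is finite
  have hSfin : S.Finite := by
    have hsub : S ⊆ N ∪ ⋃ w ∈ N, {u | u ≠ v ∧ G.Adj w u} := by
      rintro u ⟨hu, h | ⟨w, hvw, hwu⟩⟩
      · exact Or.inl h
      · exact Or.inr (Set.mem_biUnion hvw ⟨hu, hwu⟩)
    exact (hNfin.union (hNfin.biUnion hMfin)).subset hsub
  -- the set of forbidden colors
  set g : V → Fin (2 * Δ + 7) := fun u => if h : u = v then (0 : Fin (2 * Δ + 7)) else c ⟨u, h⟩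
    with hg
  set F : Finset (Fin (2 * Δ + 7)) := hSfin.toFinset.image g with hF
  have hScard : Nat.card S ≤ 2 * Δ + 6 := hfew
  have hFcard : F.card ≤ 2 * Δ + 6 := by
    calc F.card ≤ hSfin.toFinset.card := Finset.card_image_le
    _ = S.ncard := (Set.ncard_eq_toFinset_card S hSfin).symm
    _ = Nat.card S := (Nat.card_coe_set_eq S).symm
    _ ≤ 2 * Δ + 6 := hScard
  obtain ⟨a, ha⟩ : ∃ a, a ∉ F := by
    by_contra h
    push_neg at h
    have : (Finset.univ : Finset (Fin (2 * Δ + 7))) ⊆ F := fun x _ => h x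
    have := Finset.card_le_card this
    simp [Finset.card_univ] at this
    omega
  -- the extended coloring
  refine ⟨Coloring.mk (fun u => if h : u = v then a else c ⟨u, h⟩) ?_⟩
  have key : ∀ w, G.square.Adj v w →
      a ≠ (fun u => if h : u = v then a else c ⟨u, h⟩) w := by
    intro w ⟨hne, hpath⟩
    have hw : w ≠ v := hne.symm
    simp only [dif_neg hw]
    have hwS : w ∈ S := ⟨hw, hpath⟩
    intro hcon
    apply ha
    rw [hF]
    refine Finset.mem_image.mpr ⟨w, hSfin.mem_toFinset.mpr hwS, ?_⟩
    rw [hg]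
    simp only [dif_neg hw]
    exact hcon.symm
  intro u w hadj
  by_cases hu : u = v
  · subst hu
    simp only [dif_pos rfl]
    have := key w hadj
    simpa using this
  · by_cases hw : w = v
    · subst hw
      simp only [dif_pos rfl, dif_neg hu]
      have := key u hadj.symm
      simp only [dif_neg hu] at this
      exact fun h => this h.symm
    · simp only [dif_neg hu, dif_neg hw]
      refine c.valid ?_
      obtain ⟨hne, hpath⟩ := hadj
      have hne' : (⟨u, hu⟩ : {x // x ≠ v}) ≠ ⟨w, hw⟩ :=
        fun h => hne (congrArg Subtype.val h)
      rcases hpath with h | ⟨m, hum, hmw⟩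
      · exact ⟨hne', Or.inl h⟩
      · by_cases hm : m = v
        · subst hm
          exact hnbr ⟨u, hu⟩ ⟨w, hw⟩ hum.symm hmw hne'
        · exact ⟨hne', Or.inr ⟨⟨m, hm⟩, hum, hmw⟩⟩
end

section
/- Let G be a graph with maximum degree Δ ≥ 3 containing a vertex v of degree 2 with neighbors u and w. If the planar graph G' = (G − v) + uw satisfies χ₂(G') ≤ 2Δ + 7, then χ₂(G) ≤ 2Δ + 7. -/
open SimpleGraph

/-- A graph is planar if it has a drawing in the plane: an injective placement of the
vertices and, for each edge, a simple arc joining the endpoints, such that arcs avoid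
all vertex points and the interiors of arcs of distinct edges are disjoint. -/
def IsPlanar {V : Type*} (G : SimpleGraph V) : Prop :=
  ∃ (pos : V → ℝ × ℝ) (arc : V → V → ℝ → ℝ × ℝ),
    Function.Injective pos ∧
    (∀ u v, G.Adj u v →
      Continuous (arc u v) ∧ arc u v 0 = pos u ∧ arc u v 1 = pos v ∧
      Set.InjOn (arc u v) (Set.Icc 0 1) ∧
      ∀ w, pos w ∉ arc u v '' Set.Ioo 0 1) ∧
    ∀ u v x y, G.Adj u v → G.Adj x y → s(u, v) ≠ s(x, y) →
      Disjoint (arc u v '' Set.Ioo 0 1) (arc x y '' Set.Ioo 0 1)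

/-- Let `G` have maximum degree `Δ ≥ 3` and contain a vertex `v` of degree 2 with
neighbors `u` and `w`. If the planar graph `G' = (G − v) + uw` satisfies
`χ₂(G') ≤ 2Δ + 7`, then `χ₂(G) ≤ 2Δ + 7`. -/
theorem stmt8 {V : Type*} (G : SimpleGraph V) (Δ : ℕ) (hΔ : 3 ≤ Δ)
    (hdeg : maxDegIs G Δ) (v u w : V) (hv : degN G v = 2) (huw : u ≠ w)
    (hvu : G.Adj v u) (hvw : G.Adj v w)
    (G' : SimpleGraph {x : V // x ≠ v})
    (hG' : G' = (G.induce {x | x ≠ v}) ⊔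
      SimpleGraph.fromEdgeSet {s(⟨u, hvu.ne'⟩, ⟨w, hvw.ne'⟩)})
    (hplanar : IsPlanar G') (hcol : chi2 G' ≤ ((2 * Δ + 7 : ℕ) : ℕ∞)) :
    chi2 G ≤ ((2 * Δ + 7 : ℕ) : ℕ∞) := by
    classical
  set n := 2 * Δ + 7 with hn
  rw [chi2, SimpleGraph.chromaticNumber_le_iff_colorable] at hcol ⊢
  obtain ⟨C⟩ := hcol
  -- neighbor set of v is {u, w}
  have hNv : {y | G.Adj v y} = {u, w} := by
    have h2 : ({y | G.Adj v y} : Set V).ncard = 2 := by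
      rw [← Nat.card_coe_set_eq]; exact hv
    obtain ⟨a, b, hab, hset⟩ := Set.ncard_eq_two.mp h2
    have hu' : u ∈ ({a, b} : Set V) := hset ▸ hvu
    have hw' : w ∈ ({a, b} : Set V) := hset ▸ hvw
    rw [hset]
    rcases hu' with rfl | rfl <;> rcases hw' with rfl | rfl <;>
      first | exact absurd rfl huw | simp [Set.pair_comm]
  -- adjacency in G' from adjacency in G among non-v vertices
  have hG'adj : ∀ (x y : V) (hx : x ≠ v) (hy : y ≠ v), G.Adj x y →
      G'.Adj ⟨x, hx⟩ ⟨y, hy⟩ := by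
    intro x y hx hy hadj
    rw [hG']
    exact Or.inl hadj
  -- key: square adjacency transfers
  have hkey : ∀ (x y : V) (hx : x ≠ v) (hy : y ≠ v), G.square.Adj x y →
      G'.square.Adj ⟨x, hx⟩ ⟨y, hy⟩ := by
    intro x y hx hy ⟨hne, hadj⟩
    refine ⟨by simpa using hne, ?_⟩
    rcases hadj with h | ⟨z, h1, h2⟩
    · exact Or.inl (hG'adj x y hx hy h)
    · by_cases hz : z = v
      · subst hz
        have hx' : x ∈ ({u, w} : Set V) := hNv ▸ h1.symm
        have hy' : y ∈ ({u, w} : Set V) := hNv ▸ h2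
        left
        rw [hG']
        right
        constructor
        · rcases hx' with rfl | rfl <;> rcases hy' with rfl | rfl <;>
            simp_all [Sym2.eq_swap]
        · simpa using hne
      · exact Or.inr ⟨⟨z, hz⟩, hG'adj x z hx hz h1, hG'adj z y hz hy h2⟩
  -- finiteness of neighborhoods of vertices ≠ v
  have hfin : ∀ (x : V), x ≠ v → ({y | G.Adj x y} : Set V).Finite := by
    intro x hx
    have hsub : ({y | G.Adj x y} : Set V) ⊆ insert v {y | G.Adj x y ∧ y ≠ v} := by
      intro y hy
      by_cases h : y = v
      · exact h ▸ Set.mem_insert _ _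
      · exact Set.mem_insert_of_mem _ ⟨hy, h⟩
    refine Set.Finite.subset (Set.Finite.insert v ?_) hsub
    rw [← Set.not_infinite]
    intro hinf
    have hinj : Function.Injective
        (fun y : {y | G.Adj x y ∧ y ≠ v} => C ⟨y.1, y.2.2⟩) := by
      intro y₁ y₂ he
      by_contra hne
      have hne' : y₁.1 ≠ y₂.1 := fun h => hne (Subtype.ext h)
      have : G'.square.Adj ⟨y₁.1, y₁.2.2⟩ ⟨y₂.1, y₂.2.2⟩ :=
        hkey _ _ _ _ ⟨hne', Or.inr ⟨x, y₁.2.1.symm, y₂.2.1⟩⟩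
      exact C.valid this he
    have : Finite {y | G.Adj x y ∧ y ≠ v} := Finite.of_injective _ hinj
    exact hinf (Set.toFinite _)
  -- the forbidden set
  have hNvfin : ({y | G.Adj v y} : Set V).Finite := by rw [hNv]; exact Set.toFinite _
  set F : Set V := {x | G.square.Adj v x} with hF
  have hFsub : F ⊆ ({u, w} : Set V) ∪ {y | G.Adj u y} ∪ {y | G.Adj w y} := by
    rintro x ⟨hne, h | ⟨z, h1, h2⟩⟩
    · exact Or.inl (Or.inl (hNv ▸ h))
    · have hz : z ∈ ({u, w} : Set V) := hNv ▸ h1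
      rcases hz with rfl | rfl
      · exact Or.inl (Or.inr h2)
      · exact Or.inr h2
  have hufin := hfin u hvu.ne'
  have hwfin := hfin w hvw.ne'
  have hFfin : F.Finite :=
    Set.Finite.subset (((Set.toFinite _).union hufin).union hwfin) hFsub
  have hdu : ({y | G.Adj u y} : Set V).ncard ≤ Δ := by
    rw [← Nat.card_coe_set_eq]; exact hdeg.1 u
  have hdw : ({y | G.Adj w y} : Set V).ncard ≤ Δ := by
    rw [← Nat.card_coe_set_eq]; exact hdeg.1 w
  have hFcard : F.ncard ≤ 2 * Δ + 2 := by
    calc F.ncard ≤ (({u, w} : Set V) ∪ {y | G.Adj u y} ∪ {y | G.Adj w y}).ncard :=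
          Set.ncard_le_ncard hFsub (((Set.toFinite _).union hufin).union hwfin)
      _ ≤ (({u, w} : Set V) ∪ {y | G.Adj u y}).ncard + ({y | G.Adj w y}).ncard :=
          Set.ncard_union_le _ _
      _ ≤ (({u, w} : Set V).ncard + ({y | G.Adj u y}).ncard) + ({y | G.Adj w y}).ncard :=
          by gcongr; exact Set.ncard_union_le _ _
      _ ≤ (2 + Δ) + Δ := by
          gcongr
          · exact le_of_eq (Set.ncard_pair huw)
      _ ≤ 2 * Δ + 2 := by omega
  -- used colors on F
  set T : Set (Fin n) := (fun x : F => C ⟨x.1, x.2.1.symm⟩) '' Set.univ with hT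
  haveI := hFfin.to_subtype
  have hTcard : T.ncard ≤ 2 * Δ + 2 := by
    calc T.ncard ≤ (Set.univ : Set F).ncard := Set.ncard_image_le (Set.toFinite _)
      _ = Nat.card F := Set.ncard_univ _
      _ = F.ncard := Nat.card_coe_set_eq _
      _ ≤ 2 * Δ + 2 := hFcard
  have hTne : T ≠ Set.univ := by
    intro h
    rw [h, Set.ncard_univ, Nat.card_eq_fintype_card, Fintype.card_fin] at hTcard
    omega
  obtain ⟨c, hc⟩ := Set.ne_univ_iff_exists_notMem _ |>.mp hTne
  -- build the coloring
  refine ⟨SimpleGraph.Coloring.mk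
    (fun x => if h : x = v then c else C ⟨x, h⟩) ?_⟩
  intro x y hadj
  show (if h : x = v then c else C ⟨x, h⟩) ≠ (if h : y = v then c else C ⟨y, h⟩)
  by_cases hx : x = v <;> by_cases hy : y = v
  · exact absurd hadj (by rw [hx, hy]; exact G.square.loopless.irrefl v)
  · subst hx
    rw [dif_pos rfl, dif_neg hy]
    intro h
    exact hc ⟨⟨y, hadj⟩, Set.mem_univ _, h.symm⟩
  · subst hy
    rw [dif_neg hx, dif_pos rfl]
    intro h
    exact hc ⟨⟨x, hadj.symm⟩, Set.mem_univ _, h⟩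
  · rw [dif_neg hx, dif_neg hy]
    exact C.valid (hkey x y hx hy hadj)
end

section
/- Let G be a minimal counterexample (with respect to the order comparing first by fewer vertices, then by more edges) among planar graphs of maximum degree Δ ≥ 9 with χ₂(G) > 2Δ + 7. Then G contains no edge uv such that G − {u, v} is disconnected. -/
open SimpleGraph

/-- `G` is a minimal counterexample (fewest vertices, then most edges) among planar
graphs of maximum degree at most `Δ` to the bound `χ₂ ≤ 2Δ + 7`. -/
def MinimalCex (Δ : ℕ) {V : Type*} [Fintype V] (G : SimpleGraph V) : Prop :=
  IsPlanar G ∧ maxDegIs G Δ ∧ ((2 * Δ + 7 : ℕ) : ℕ∞) < chi2 G ∧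
  ∀ (n : ℕ) (H : SimpleGraph (Fin n)), IsPlanar H →
    (∀ v, degN H v ≤ Δ) →
    (n < Fintype.card V ∨
      (n = Fintype.card V ∧ Nat.card G.edgeSet < Nat.card H.edgeSet)) →
    chi2 H ≤ ((2 * Δ + 7 : ℕ) : ℕ∞)

lemma isPlanar_of_equiv {α β : Type*} (e : α ≃ β) {G : SimpleGraph α} {H : SimpleGraph β}
    (hadj : ∀ i j, H.Adj i j ↔ G.Adj (e.symm i) (e.symm j)) (h : IsPlanar G) : IsPlanar H := by
  obtain ⟨pos, arc, hinj, harc, hdisj⟩ := h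
  refine ⟨fun i => pos (e.symm i), fun i j => arc (e.symm i) (e.symm j),
    hinj.comp e.symm.injective, ?_, ?_⟩
  · intro i j hij
    obtain ⟨h1, h2, h3, h4, h5⟩ := harc _ _ ((hadj i j).1 hij)
    exact ⟨h1, h2, h3, h4, fun w => h5 (e.symm w)⟩
  · intro i j k l hij hkl hne
    apply hdisj _ _ _ _ ((hadj i j).1 hij) ((hadj k l).1 hkl)
    intro heq
    apply hne
    have := congrArg (Sym2.map e) heq
    simpa [Sym2.map_pair_eq] using this

lemma isPlanar_induce {V : Type*} {G : SimpleGraph V} (h : IsPlanar G) (s : Set V) :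
    IsPlanar (G.induce s) := by
  obtain ⟨pos, arc, hinj, harc, hdisj⟩ := h
  refine ⟨fun x => pos ↑x, fun x y => arc ↑x ↑y,
    fun x y hxy => Subtype.ext (hinj hxy), ?_, ?_⟩
  · intro x y hxy
    obtain ⟨h1, h2, h3, h4, h5⟩ := harc _ _ hxy
    exact ⟨h1, h2, h3, h4, fun w => h5 ↑w⟩
  · intro x y z w hxy hzw hne
    apply hdisj _ _ _ _ hxy hzw
    intro heq
    exact hne (Sym2.map.injective Subtype.val_injective
      (by simpa [Sym2.map_pair_eq] using heq))

lemma degN_induce_le {V : Type*} [Fintype V] (G : SimpleGraph V) (s : Set V) (x : s) :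
    degN (G.induce s) x ≤ degN G ↑x := by
  apply Nat.card_le_card_of_injective
    (fun y : {y : s // (G.induce s).Adj x y} => (⟨↑y.1, y.2⟩ : {y : V // G.Adj ↑x y}))
  intro a b hab
  simp only [Subtype.mk.injEq] at hab
  exact Subtype.ext (Subtype.ext (Subtype.mk.inj hab))

lemma exists_injOn_avoid {β : Type*} [Fintype β] [DecidableEq β] (D F : Finset β)
    (h : F.card + D.card ≤ Fintype.card β) :
    ∃ f : β → β, Set.InjOn f ↑D ∧ ∀ d ∈ D, f d ∉ F := by
  have hcard : Fintype.card ↥D ≤ Fintype.card ↥(Fᶜ : Finset β) := by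
    simp only [Fintype.card_coe, Finset.card_compl]
    omega
  obtain ⟨emb⟩ := Function.Embedding.nonempty_of_card_le hcard
  classical
  refine ⟨fun x => if hx : x ∈ D then ↑(emb ⟨x, hx⟩) else x, ?_, ?_⟩
  · intro a ha b hb hab
    simp only [Finset.mem_coe] at ha hb
    dsimp only at hab
    rw [dif_pos ha, dif_pos hb] at hab
    have := emb.injective (Subtype.ext hab)
    exact congrArg Subtype.val this
  · intro d hd
    dsimp only
    rw [dif_pos hd]
    exact Finset.mem_compl.1 (emb ⟨d, hd⟩).2

lemma exists_injective_extend {β : Type*} [Fintype β] [DecidableEq β] (s : Finset β)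
    (f : β → β) (hf : Set.InjOn f ↑s) :
    ∃ g : β → β, Function.Injective g ∧ ∀ x ∈ s, g x = f x := by
  classical
  set t := s.image f with ht
  have htc : t.card = s.card := Finset.card_image_of_injOn hf
  have hcc : (sᶜ : Finset β).card = (tᶜ : Finset β).card := by
    rw [Finset.card_compl, Finset.card_compl, htc]
  let e := Finset.equivOfCardEq hcc
  refine ⟨fun x => if hx : x ∈ s then f x else ↑(e ⟨x, Finset.mem_compl.2 hx⟩), ?_, ?_⟩
  · intro a b hab
    dsimp only at hab
    by_cases ha : a ∈ s <;> by_cases hb : b ∈ s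
    · rw [dif_pos ha, dif_pos hb] at hab
      exact hf ha hb hab
    · rw [dif_pos ha, dif_neg hb] at hab
      exfalso
      have h1 : f a ∈ t := Finset.mem_image_of_mem f ha
      have h2 : (↑(e ⟨b, Finset.mem_compl.2 hb⟩) : β) ∈ tᶜ := (e _).2
      rw [← hab] at h2
      exact (Finset.mem_compl.1 h2) h1
    · rw [dif_neg ha, dif_pos hb] at hab
      exfalso
      have h1 : f b ∈ t := Finset.mem_image_of_mem f hb
      have h2 : (↑(e ⟨a, Finset.mem_compl.2 ha⟩) : β) ∈ tᶜ := (e _).2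
      rw [hab] at h2
      exact (Finset.mem_compl.1 h2) h1
    · rw [dif_neg ha, dif_neg hb] at hab
      have := e.injective (Subtype.ext hab)
      exact congrArg Subtype.val this
  · intro x hx
    dsimp only
    rw [dif_pos hx]

lemma colorable_of_small {V : Type*} [Fintype V] {Δ : ℕ}
    (hmin : ∀ (n : ℕ) (H : SimpleGraph (Fin n)), IsPlanar H → (∀ v, degN H v ≤ Δ) →
      n < Fintype.card V → chi2 H ≤ ((2 * Δ + 7 : ℕ) : ℕ∞))
    {α : Type*} [Fintype α] (G' : SimpleGraph α) (hp : IsPlanar G')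
    (hd : ∀ x, degN G' x ≤ Δ) (hcard : Fintype.card α < Fintype.card V) :
    G'.square.Colorable (2 * Δ + 7) := by
  let n := Fintype.card α
  let e := Fintype.equivFin α
  let H : SimpleGraph (Fin n) :=
    { Adj := fun i j => G'.Adj (e.symm i) (e.symm j)
      symm := ⟨fun i j h => h.symm⟩
      loopless := ⟨fun i h => G'.irrefl h⟩ }
  have hH : ∀ i j, H.Adj i j ↔ G'.Adj (e.symm i) (e.symm j) := fun _ _ => Iff.rfl
  have hpH : IsPlanar H := isPlanar_of_equiv e hH hp
  have hdH : ∀ i, degN H i ≤ Δ := by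
    intro i
    have heq : degN H i = degN G' (e.symm i) :=
      Nat.card_congr (Equiv.subtypeEquiv e.symm (fun j => Iff.rfl))
    rw [heq]; exact hd _
  have hle := hmin n H hpH hdH hcard
  rw [chi2, SimpleGraph.chromaticNumber_le_iff_colorable] at hle
  obtain ⟨cH⟩ := hle
  refine ⟨SimpleGraph.Coloring.mk (fun x => cH (e x)) ?_⟩
  intro x y hxy
  apply cH.valid
  refine ⟨fun h => hxy.1 (by simpa using congrArg e.symm h), ?_⟩
  rcases hxy.2 with h | ⟨w, h1, h2⟩
  · left
    show G'.Adj (e.symm (e x)) (e.symm (e y))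
    simpa using h
  · right
    refine ⟨e w, ?_, ?_⟩
    · show G'.Adj (e.symm (e x)) (e.symm (e w)); simpa using h1
    · show G'.Adj (e.symm (e w)) (e.symm (e y)); simpa using h2


set_option maxHeartbeats 1600000 in
/-- A minimal counterexample contains no edge `uv` such that `G − {u, v}` is
disconnected. -/
theorem stmt9 {V : Type*} [Fintype V] (G : SimpleGraph V) (Δ : ℕ) (hΔ : 9 ≤ Δ)
    (hmin : MinimalCex Δ G) :
    ∀ u v : V, G.Adj u v → (G.induce {x | x ≠ u ∧ x ≠ v}).Preconnected := by
  classical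
  obtain ⟨hplanar, ⟨hdeg, -⟩, hgt, hminrec⟩ := hmin
  have hmin' : ∀ (n : ℕ) (H : SimpleGraph (Fin n)), IsPlanar H → (∀ v, degN H v ≤ Δ) →
      n < Fintype.card V → chi2 H ≤ ((2 * Δ + 7 : ℕ) : ℕ∞) :=
    fun n H hp hd hlt => hminrec n H hp hd (Or.inl hlt)
  intro u v huv
  by_contra hncon
  set S : Set V := {x | x ≠ u ∧ x ≠ v} with hSdef
  rw [SimpleGraph.Preconnected] at hncon
  push_neg at hncon
  obtain ⟨a, b, hab⟩ := hncon
  set A : Set V := {x | ∃ hx : x ∈ S, (G.induce S).Reachable a ⟨x, hx⟩} with hAdef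
  have hAS : A ⊆ S := fun x hx => hx.1
  have haA : (↑a : V) ∈ A := ⟨a.2, SimpleGraph.Reachable.refl _⟩
  have hbA : (↑b : V) ∉ A := by
    rintro ⟨hb, hr⟩
    exact hab hr
  have hclosed : ∀ x, x ∈ A → ∀ y, y ∈ S → G.Adj x y → y ∈ A := by
    rintro x ⟨hx, hr⟩ y hy hxy
    exact ⟨hy, hr.trans (SimpleGraph.Adj.reachable
      (show (G.induce S).Adj ⟨x, hx⟩ ⟨y, hy⟩ from hxy))⟩
  have hnocross : ∀ x, x ∈ A → ∀ y, y ∈ S → y ∉ A → ¬ G.Adj x y :=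
    fun x hx y hy hyA hxy => hyA (hclosed x hx y hy hxy)
  set V₁ : Set V := A ∪ {u, v} with hV1def
  set V₂ : Set V := (S \ A) ∪ {u, v} with hV2def
  have huvne : u ≠ v := huv.ne
  have hu1 : u ∈ V₁ := Or.inr (Set.mem_insert _ _)
  have hv1 : v ∈ V₁ := Or.inr (Set.mem_insert_of_mem _ rfl)
  have hu2 : u ∈ V₂ := Or.inr (Set.mem_insert _ _)
  have hv2 : v ∈ V₂ := Or.inr (Set.mem_insert_of_mem _ rfl)
  have hb1 : (↑b : V) ∉ V₁ := by
    rintro (h | h | h)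
    · exact hbA h
    · exact b.2.1 h
    · exact b.2.2 h
  have ha2 : (↑a : V) ∉ V₂ := by
    rintro (h | h | h)
    · exact h.2 haA
    · exact a.2.1 h
    · exact a.2.2 h
  have hcover : ∀ x, x ∉ V₁ → x ∈ S ∧ x ∉ A ∧ x ∈ V₂ := by
    intro x hx
    have hxu : x ≠ u := fun h => hx (h ▸ hu1)
    have hxv : x ≠ v := fun h => hx (h ▸ hv1)
    have hxS : x ∈ S := ⟨hxu, hxv⟩
    have hxA : x ∉ A := fun h => hx (Or.inl h)
    exact ⟨hxS, hxA, Or.inl ⟨hxS, hxA⟩⟩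
  have hV1cases : ∀ x, x ∈ V₁ → x ∈ A ∨ x = u ∨ x = v := by
    rintro x (h | h | h)
    · exact Or.inl h
    · exact Or.inr (Or.inl h)
    · exact Or.inr (Or.inr h)
  have hmidV2 : ∀ y w, y ∈ S → y ∉ A → G.Adj w y → w ∈ V₂ := by
    intro y w hyS hyA hwy
    by_cases hw1 : w ∈ V₁
    · rcases hV1cases w hw1 with hwA | h | h
      · exact absurd hwy (fun hadj => hyA (hclosed w hwA y hyS hadj))
      · exact h ▸ hu2
      · exact h ▸ hv2
    · exact (hcover w hw1).2.2
  have hcard1 : Fintype.card ↥V₁ < Fintype.card V := by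
    convert Fintype.card_subtype_lt (p := fun x => x ∈ V₁) (x := (↑b : V)) hb1 using 2
  have hcard2 : Fintype.card ↥V₂ < Fintype.card V := by
    convert Fintype.card_subtype_lt (p := fun x => x ∈ V₂) (x := (↑a : V)) ha2 using 2
  obtain ⟨c₁⟩ : (G.induce V₁).square.Colorable (2 * Δ + 7) :=
    colorable_of_small hmin' _ (isPlanar_induce hplanar V₁)
      (fun x => le_trans (degN_induce_le G V₁ x) (hdeg _)) hcard1
  obtain ⟨c₂⟩ : (G.induce V₂).square.Colorable (2 * Δ + 7) :=
    colorable_of_small hmin' _ (isPlanar_induce hplanar V₂)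
      (fun x => le_trans (degN_induce_le G V₂ x) (hdeg _)) hcard2
  let u₁ : ↥V₁ := ⟨u, hu1⟩
  let v₁ : ↥V₁ := ⟨v, hv1⟩
  let u₂ : ↥V₂ := ⟨u, hu2⟩
  let v₂ : ↥V₂ := ⟨v, hv2⟩
  have hsq1 : ∀ (x y : ↥V₁), (↑x : V) ≠ ↑y →
      (G.Adj ↑x ↑y ∨ ∃ w : ↥V₁, G.Adj ↑x ↑w ∧ G.Adj ↑w ↑y) → c₁ x ≠ c₁ y := by
    intro x y hne hadj
    apply c₁.valid
    exact ⟨fun h => hne (congrArg Subtype.val h), hadj.imp id (fun ⟨w, h1, h2⟩ => ⟨w, h1, h2⟩)⟩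
  have hsq2 : ∀ (x y : ↥V₂), (↑x : V) ≠ ↑y →
      (G.Adj ↑x ↑y ∨ ∃ w : ↥V₂, G.Adj ↑x ↑w ∧ G.Adj ↑w ↑y) → c₂ x ≠ c₂ y := by
    intro x y hne hadj
    apply c₂.valid
    exact ⟨fun h => hne (congrArg Subtype.val h), hadj.imp id (fun ⟨w, h1, h2⟩ => ⟨w, h1, h2⟩)⟩
  set NU : Finset V := Finset.univ.filter (fun x => G.Adj u x) with hNUdef
  set NV : Finset V := Finset.univ.filter (fun x => G.Adj v x) with hNVdef
  set Nu1 : Finset ↥V₁ := Finset.univ.filter (fun x => G.Adj u ↑x) with hNu1def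
  set Nv1 : Finset ↥V₁ := Finset.univ.filter (fun x => G.Adj v ↑x) with hNv1def
  set Nu2 : Finset ↥V₂ := Finset.univ.filter (fun y => G.Adj u ↑y ∧ (↑y : V) ≠ v) with hNu2def
  set Nv2 : Finset ↥V₂ := Finset.univ.filter (fun y => G.Adj v ↑y ∧ (↑y : V) ≠ u) with hNv2def
  set F : Finset (Fin (2 * Δ + 7)) := Nu1.image c₁ ∪ Nv1.image c₁ ∪ {c₁ u₁, c₁ v₁} with hFdef
  set D : Finset (Fin (2 * Δ + 7)) := Nu2.image c₂ ∪ Nv2.image c₂ with hDdef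
  have hNUcard : NU.card = degN G u := by
    rw [degN, Nat.card_eq_fintype_card, Fintype.card_subtype]
  have hNVcard : NV.card = degN G v := by
    rw [degN, Nat.card_eq_fintype_card, Fintype.card_subtype]
  have hcardu : Nu1.card + Nu2.card ≤ Δ := by
    have hdisj : Disjoint (Nu1.image (Subtype.val)) (Nu2.image (Subtype.val)) := by
      rw [Finset.disjoint_left]
      intro x hx1 hx2
      obtain ⟨x1, hx1m, rfl⟩ := Finset.mem_image.1 hx1
      obtain ⟨x2, hx2m, hx2e⟩ := Finset.mem_image.1 hx2
      have hadjx : G.Adj u ↑x1 := (Finset.mem_filter.1 hx1m).2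
      have h2 := (Finset.mem_filter.1 hx2m).2
      rcases (show (↑x2 : V) ∈ S \ A ∨ (↑x2 : V) ∈ ({u, v} : Set V) from x2.2) with hw | hw
      · rcases hV1cases ↑x1 x1.2 with hA | h | h
        · rw [hx2e] at hw; exact hw.2 hA
        · rw [hx2e, h] at hw; exact hw.1.1 rfl
        · rw [hx2e, h] at hw; exact hw.1.2 rfl
      · rcases hw with hw | hw
        · exact h2.1.ne hw.symm
        · exact h2.2 (Set.mem_singleton_iff.1 hw)
    have hsub : Nu1.image (Subtype.val) ∪ Nu2.image (Subtype.val) ⊆ NU := by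
      intro x hx
      rcases Finset.mem_union.1 hx with hx | hx
      · obtain ⟨x1, hx1m, rfl⟩ := Finset.mem_image.1 hx
        exact Finset.mem_filter.2 ⟨Finset.mem_univ _, (Finset.mem_filter.1 hx1m).2⟩
      · obtain ⟨x2, hx2m, rfl⟩ := Finset.mem_image.1 hx
        exact Finset.mem_filter.2 ⟨Finset.mem_univ _, (Finset.mem_filter.1 hx2m).2.1⟩
    calc Nu1.card + Nu2.card
        = (Nu1.image (Subtype.val)).card + (Nu2.image (Subtype.val)).card := by
          rw [Finset.card_image_of_injective _ Subtype.val_injective,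
            Finset.card_image_of_injective _ Subtype.val_injective]
      _ = (Nu1.image (Subtype.val) ∪ Nu2.image (Subtype.val)).card :=
          (Finset.card_union_of_disjoint hdisj).symm
      _ ≤ NU.card := Finset.card_le_card hsub
      _ = degN G u := hNUcard
      _ ≤ Δ := hdeg u
  have hcardv : Nv1.card + Nv2.card ≤ Δ := by
    have hdisj : Disjoint (Nv1.image (Subtype.val)) (Nv2.image (Subtype.val)) := by
      rw [Finset.disjoint_left]
      intro x hx1 hx2
      obtain ⟨x1, hx1m, rfl⟩ := Finset.mem_image.1 hx1
      obtain ⟨x2, hx2m, hx2e⟩ := Finset.mem_image.1 hx2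
      have hadjx : G.Adj v ↑x1 := (Finset.mem_filter.1 hx1m).2
      have h2 := (Finset.mem_filter.1 hx2m).2
      rcases (show (↑x2 : V) ∈ S \ A ∨ (↑x2 : V) ∈ ({u, v} : Set V) from x2.2) with hw | hw
      · rcases hV1cases ↑x1 x1.2 with hA | h | h
        · rw [hx2e] at hw; exact hw.2 hA
        · rw [hx2e, h] at hw; exact hw.1.1 rfl
        · rw [hx2e, h] at hw; exact hw.1.2 rfl
      · rcases hw with hw | hw
        · exact h2.2 hw
        · exact h2.1.ne (Set.mem_singleton_iff.1 hw).symm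
    have hsub : Nv1.image (Subtype.val) ∪ Nv2.image (Subtype.val) ⊆ NV := by
      intro x hx
      rcases Finset.mem_union.1 hx with hx | hx
      · obtain ⟨x1, hx1m, rfl⟩ := Finset.mem_image.1 hx
        exact Finset.mem_filter.2 ⟨Finset.mem_univ _, (Finset.mem_filter.1 hx1m).2⟩
      · obtain ⟨x2, hx2m, rfl⟩ := Finset.mem_image.1 hx
        exact Finset.mem_filter.2 ⟨Finset.mem_univ _, (Finset.mem_filter.1 hx2m).2.1⟩
    calc Nv1.card + Nv2.card
        = (Nv1.image (Subtype.val)).card + (Nv2.image (Subtype.val)).card := by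
          rw [Finset.card_image_of_injective _ Subtype.val_injective,
            Finset.card_image_of_injective _ Subtype.val_injective]
      _ = (Nv1.image (Subtype.val) ∪ Nv2.image (Subtype.val)).card :=
          (Finset.card_union_of_disjoint hdisj).symm
      _ ≤ NV.card := Finset.card_le_card hsub
      _ = degN G v := hNVcard
      _ ≤ Δ := hdeg v
  have hFcard : F.card ≤ Nu1.card + Nv1.card + 2 := by
    calc F.card ≤ (Nu1.image c₁ ∪ Nv1.image c₁).card + ({c₁ u₁, c₁ v₁} : Finset _).card :=
          Finset.card_union_le _ _
      _ ≤ (Nu1.image c₁).card + (Nv1.image c₁).card + ({c₁ u₁, c₁ v₁} : Finset _).card :=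
          Nat.add_le_add_right (Finset.card_union_le _ _) _
      _ ≤ Nu1.card + Nv1.card + 2 := by
          have h1 := Finset.card_image_le (s := Nu1) (f := c₁)
          have h2 := Finset.card_image_le (s := Nv1) (f := c₁)
          have h3 : ({c₁ u₁, c₁ v₁} : Finset _).card ≤ 2 := Finset.card_insert_le _ _ |>.trans (by simp)
          omega
  have hDcard : D.card ≤ Nu2.card + Nv2.card := by
    calc D.card ≤ (Nu2.image c₂).card + (Nv2.image c₂).card := Finset.card_union_le _ _
      _ ≤ Nu2.card + Nv2.card := Nat.add_le_add Finset.card_image_le Finset.card_image_le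
  have hcards : F.card + D.card ≤ Fintype.card (Fin (2 * Δ + 7)) := by
    rw [Fintype.card_fin]
    omega
  obtain ⟨f, hfinj, hfF⟩ := exists_injOn_avoid D F hcards
  have hc2uv : c₂ u₂ ≠ c₂ v₂ := hsq2 u₂ v₂ huvne (Or.inl huv)
  have hc1uv : c₁ u₁ ≠ c₁ v₁ := hsq1 u₁ v₁ huvne (Or.inl huv)
  have hDne : ∀ d ∈ D, d ≠ c₂ u₂ ∧ d ≠ c₂ v₂ := by
    intro d hd
    rcases Finset.mem_union.1 hd with h | h
    · obtain ⟨y, hy, rfl⟩ := Finset.mem_image.1 h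
      obtain ⟨hyu, hyv⟩ := (Finset.mem_filter.1 hy).2
      constructor
      · exact hsq2 y u₂ hyu.ne' (Or.inl hyu.symm)
      · exact hsq2 y v₂ hyv (Or.inr ⟨u₂, hyu.symm, huv⟩)
    · obtain ⟨y, hy, rfl⟩ := Finset.mem_image.1 h
      obtain ⟨hyv, hyu⟩ := (Finset.mem_filter.1 hy).2
      constructor
      · exact hsq2 y u₂ hyu (Or.inr ⟨v₂, hyv.symm, huv.symm⟩)
      · exact hsq2 y v₂ hyv.ne' (Or.inl hyv.symm)
  set f₀ : Fin (2 * Δ + 7) → Fin (2 * Δ + 7) :=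
    fun c => if c = c₂ u₂ then c₁ u₁ else if c = c₂ v₂ then c₁ v₁ else f c with hf0def
  set dom : Finset (Fin (2 * Δ + 7)) := insert (c₂ u₂) (insert (c₂ v₂) D) with hdomdef
  have hf0u : f₀ (c₂ u₂) = c₁ u₁ := by rw [hf0def]; simp
  have hf0v : f₀ (c₂ v₂) = c₁ v₁ := by rw [hf0def]; simp [hc2uv.symm]
  have hf0D : ∀ d ∈ D, f₀ d = f d := by
    intro d hd
    rw [hf0def]
    simp only []
    rw [if_neg (hDne d hd).1, if_neg (hDne d hd).2]
  have hu1F : c₁ u₁ ∈ F := by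
    rw [hFdef]
    exact Finset.mem_union_right _ (Finset.mem_insert_self _ _)
  have hv1F : c₁ v₁ ∈ F := by
    rw [hFdef]
    exact Finset.mem_union_right _ (Finset.mem_insert_of_mem (Finset.mem_singleton_self _))
  have hinj0 : Set.InjOn f₀ ↑dom := by
    intro x hx y hy hxy
    simp only [hdomdef, Finset.coe_insert, Set.mem_insert_iff, Finset.mem_coe] at hx hy
    rcases hx with rfl | rfl | hx <;> rcases hy with rfl | rfl | hy
    · rfl
    · rw [hf0u, hf0v] at hxy; exact absurd hxy hc1uv
    · rw [hf0u, hf0D y hy] at hxy; exact absurd (hxy ▸ hu1F) (hfF y hy)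
    · rw [hf0v, hf0u] at hxy; exact absurd hxy.symm hc1uv
    · rfl
    · rw [hf0v, hf0D y hy] at hxy; exact absurd (hxy ▸ hv1F) (hfF y hy)
    · rw [hf0u, hf0D x hx] at hxy; exact absurd (hxy ▸ hu1F) (hfF x hx)
    · rw [hf0v, hf0D x hx] at hxy; exact absurd (hxy ▸ hv1F) (hfF x hx)
    · rw [hf0D x hx, hf0D y hy] at hxy
      exact hfinj (Finset.mem_coe.2 hx) (Finset.mem_coe.2 hy) hxy
  obtain ⟨σ, hσinj, hσeq⟩ := exists_injective_extend dom f₀ hinj0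
  have hσu : σ (c₂ u₂) = c₁ u₁ :=
    (hσeq _ (Finset.mem_insert_self _ _)).trans hf0u
  have hσv : σ (c₂ v₂) = c₁ v₁ :=
    (hσeq _ (Finset.mem_insert_of_mem (Finset.mem_insert_self _ _))).trans hf0v
  have hσD : ∀ d ∈ D, σ d ∉ F := by
    intro d hd
    rw [hσeq _ (Finset.mem_insert_of_mem (Finset.mem_insert_of_mem hd)), hf0D d hd]
    exact hfF d hd
  set col : V → Fin (2 * Δ + 7) :=
    fun x => if h : x ∈ V₁ then c₁ ⟨x, h⟩ else σ (c₂ ⟨x, (hcover x h).2.2⟩) with hcoldef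
  have hcol1 : ∀ x (h : x ∈ V₁), col x = c₁ ⟨x, h⟩ := by
    intro x h
    rw [hcoldef]
    simp only []
    rw [dif_pos h]
  have hcol2 : ∀ x (h : x ∉ V₁) (h2 : x ∈ V₂), col x = σ (c₂ ⟨x, h2⟩) := by
    intro x h h2
    rw [hcoldef]
    simp only []
    rw [dif_neg h]
  have key : ∀ x y, x ∈ V₁ → y ∉ V₁ →
      x ≠ y → (G.Adj x y ∨ ∃ w, G.Adj x w ∧ G.Adj w y) → col x ≠ col y := by
    intro x y hx hy hne hadj
    obtain ⟨hyS, hyA, hy2⟩ := hcover y hy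
    rw [hcol1 x hx, hcol2 y hy hy2]
    rcases hadj with hdir | ⟨w, hw1, hw2⟩
    · rcases hV1cases x hx with hxA | rfl | rfl
      · exact absurd hdir (hnocross x hxA y hyS hyA)
      · show c₁ u₁ ≠ σ (c₂ ⟨y, hy2⟩)
        rw [← hσu]
        exact fun h => hsq2 u₂ ⟨y, hy2⟩ hdir.ne (Or.inl hdir) (hσinj h)
      · show c₁ v₁ ≠ σ (c₂ ⟨y, hy2⟩)
        rw [← hσv]
        exact fun h => hsq2 v₂ ⟨y, hy2⟩ hdir.ne (Or.inl hdir) (hσinj h)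
    · have hwV2 : w ∈ V₂ := hmidV2 y w hyS hyA hw2
      rcases hV1cases x hx with hxA | rfl | rfl
      · have hwuv : w = u ∨ w = v := by
          rcases (show w ∈ S \ A ∨ w ∈ ({u, v} : Set V) from hwV2) with hw | hw
          · exact absurd hw1 (hnocross x hxA w hw.1 hw.2)
          · exact hw
        rcases hwuv with rfl | rfl
        · have hyD : c₂ ⟨y, hy2⟩ ∈ D := by
            rw [hDdef]
            exact Finset.mem_union_left _ (Finset.mem_image_of_mem c₂
              (Finset.mem_filter.2 ⟨Finset.mem_univ _, hw2, hyS.2⟩))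
          have hxF : c₁ ⟨x, hx⟩ ∈ F := by
            rw [hFdef]
            exact Finset.mem_union_left _ (Finset.mem_union_left _
              (Finset.mem_image_of_mem c₁
                (Finset.mem_filter.2 ⟨Finset.mem_univ _, hw1.symm⟩)))
          intro h
          exact (hσD _ hyD) (h ▸ hxF)
        · have hyD : c₂ ⟨y, hy2⟩ ∈ D := by
            rw [hDdef]
            exact Finset.mem_union_right _ (Finset.mem_image_of_mem c₂
              (Finset.mem_filter.2 ⟨Finset.mem_univ _, hw2, hyS.1⟩))
          have hxF : c₁ ⟨x, hx⟩ ∈ F := by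
            rw [hFdef]
            exact Finset.mem_union_left _ (Finset.mem_union_right _
              (Finset.mem_image_of_mem c₁
                (Finset.mem_filter.2 ⟨Finset.mem_univ _, hw1.symm⟩)))
          intro h
          exact (hσD _ hyD) (h ▸ hxF)
      · show c₁ u₁ ≠ σ (c₂ ⟨y, hy2⟩)
        rw [← hσu]
        exact fun h => hsq2 u₂ ⟨y, hy2⟩ (fun he => hyS.1 he.symm)
          (Or.inr ⟨⟨w, hwV2⟩, hw1, hw2⟩) (hσinj h)
      · show c₁ v₁ ≠ σ (c₂ ⟨y, hy2⟩)
        rw [← hσv]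
        exact fun h => hsq2 v₂ ⟨y, hy2⟩ (fun he => hyS.2 he.symm)
          (Or.inr ⟨⟨w, hwV2⟩, hw1, hw2⟩) (hσinj h)
  have hvalid : ∀ {x y : V}, G.square.Adj x y → col x ≠ col y := by
    intro x y hadj
    obtain ⟨hne, hpath⟩ := hadj
    by_cases hx : x ∈ V₁ <;> by_cases hy : y ∈ V₁
    · rw [hcol1 x hx, hcol1 y hy]
      apply hsq1 ⟨x, hx⟩ ⟨y, hy⟩ hne
      rcases hpath with h | ⟨w, h1, h2⟩
      · exact Or.inl h
      · by_cases hw : w ∈ V₁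
        · exact Or.inr ⟨⟨w, hw⟩, h1, h2⟩
        · obtain ⟨hwS, hwA, -⟩ := hcover w hw
          have hxuv : x = u ∨ x = v := by
            rcases hV1cases x hx with hxA | h | h
            · exact absurd h1 (hnocross x hxA w hwS hwA)
            · exact Or.inl h
            · exact Or.inr h
          have hyuv : y = u ∨ y = v := by
            rcases hV1cases y hy with hyA | h | h
            · exact absurd h2.symm (hnocross y hyA w hwS hwA)
            · exact Or.inl h
            · exact Or.inr h
          left
          rcases hxuv with rfl | rfl <;> rcases hyuv with rfl | rfl
          · exact absurd rfl hne
          · exact huv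
          · exact huv.symm
          · exact absurd rfl hne
    · exact key x y hx hy hne hpath
    · refine (key y x hy hx hne.symm ?_).symm
      rcases hpath with h | ⟨w, h1, h2⟩
      · exact Or.inl h.symm
      · exact Or.inr ⟨w, h2.symm, h1.symm⟩
    · obtain ⟨hxS, hxA, hx2⟩ := hcover x hx
      obtain ⟨hyS, hyA, hy2⟩ := hcover y hy
      rw [hcol2 x hx hx2, hcol2 y hy hy2]
      intro h
      refine hsq2 ⟨x, hx2⟩ ⟨y, hy2⟩ hne ?_ (hσinj h)
      rcases hpath with h' | ⟨w, h1, h2⟩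
      · exact Or.inl h'
      · exact Or.inr ⟨⟨w, hmidV2 y w hyS hyA h2⟩, h1, h2⟩
  have hcolorable : G.square.Colorable (2 * Δ + 7) :=
    ⟨SimpleGraph.Coloring.mk col (fun h => hvalid h)⟩
  have hle : chi2 G ≤ ((2 * Δ + 7 : ℕ) : ℕ∞) := by
    rw [chi2, SimpleGraph.chromaticNumber_le_iff_colorable]
    exact hcolorable
  exact absurd hgt (not_lt.2 hle)
end

section
/- Let G be a minimal counterexample (fewest vertices, then most edges) among planar graphs of maximum degree Δ ≥ 9 with χ₂(G) > 2Δ + 7. Then G has no vertex of degree 1 and no vertex of degree 2. -/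
open SimpleGraph

section Helpers
open SimpleGraph
variable {W V : Type*}

lemma isPlanar_of_map (G : SimpleGraph V) (H : SimpleGraph W) (f : W → V)
    (hf : Function.Injective f) (hadj : ∀ a b, H.Adj a b → G.Adj (f a) (f b))
    (hG : IsPlanar G) : IsPlanar H := by
  obtain ⟨pos, arc, hinj, hedge, hdis⟩ := hG
  refine ⟨pos ∘ f, fun a b => arc (f a) (f b), hinj.comp hf, ?_, ?_⟩
  · intro a b hab
    obtain ⟨h1, h2, h3, h4, h5⟩ := hedge _ _ (hadj a b hab)
    exact ⟨h1, h2, h3, h4, fun w => h5 (f w)⟩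
  · intro a b x y hab hxy hne
    refine hdis _ _ _ _ (hadj _ _ hab) (hadj _ _ hxy) ?_
    intro hcon
    apply hne
    rw [Sym2.eq_iff] at hcon ⊢
    rcases hcon with ⟨h1, h2⟩ | ⟨h1, h2⟩
    · exact Or.inl ⟨hf h1, hf h2⟩
    · exact Or.inr ⟨hf h1, hf h2⟩

lemma square_colorable_of (G : SimpleGraph V) (H : SimpleGraph W) (f : W → V)
    (hf : Function.Injective f) (hadj : ∀ a b, H.Adj a b → G.Adj (f a) (f b))
    {n : ℕ} (hG : G.square.Colorable n) : H.square.Colorable n := by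
  obtain ⟨c⟩ := hG
  refine ⟨SimpleGraph.Coloring.mk (fun a => c (f a)) ?_⟩
  intro a b hab
  apply c.valid
  obtain ⟨hne, h⟩ := hab
  refine ⟨fun h' => hne (hf h'), ?_⟩
  rcases h with h | ⟨z, h1, h2⟩
  · exact Or.inl (hadj _ _ h)
  · exact Or.inr ⟨f z, hadj _ _ h1, hadj _ _ h2⟩

lemma degN_eq_ncard (G : SimpleGraph V) (u : V) :
    {x | G.Adj u x}.ncard = degN G u := by
  rw [← Nat.card_coe_set_eq]
  rfl

lemma key_colorable {V : Type*} [Fintype V] (G : SimpleGraph V) (Δ : ℕ)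
    (hmin : MinimalCex Δ G) (v : V) (H' : SimpleGraph {x : V // x ≠ v})
    (hp : IsPlanar H') (hd : ∀ a, degN H' a ≤ Δ) :
    H'.square.Colorable (2 * Δ + 7) := by
  classical
  set n := Fintype.card {x : V // x ≠ v} with hn
  let e : {x : V // x ≠ v} ≃ Fin n := Fintype.equivFin _
  let H : SimpleGraph (Fin n) := H'.comap e.symm
  have hadj1 : ∀ a b, H.Adj a b → H'.Adj (e.symm a) (e.symm b) := fun a b h => h
  have hadj2 : ∀ a b, H'.Adj a b → H.Adj (e a) (e b) := by
    intro a b h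
    show H'.Adj (e.symm (e a)) (e.symm (e b))
    simpa using h
  have hlt : n < Fintype.card V := Fintype.card_subtype_lt (x := v) (by simp)
  have hple : chi2 H ≤ ((2 * Δ + 7 : ℕ) : ℕ∞) := by
    apply hmin.2.2.2 n H
    · exact isPlanar_of_map H' H e.symm e.symm.injective hadj1 hp
    · intro i
      have : degN H i = degN H' (e.symm i) := by
        apply Nat.card_congr
        exact (e.symm.subtypeEquiv (fun j => Iff.rfl))
      rw [this]; exact hd _
    · exact Or.inl hlt
  have hc : H.square.Colorable (2 * Δ + 7) :=
    SimpleGraph.chromaticNumber_le_iff_colorable.mp hple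
  exact square_colorable_of H H' e e.injective hadj2 hc

end Helpers

section Reroute
open SimpleGraph Set

lemma isPlanar_reroute {V : Type*} (G : SimpleGraph V) (v u w : V)
    (hvu : G.Adj v u) (hvw : G.Adj v w) (huw : u ≠ w) (hGuw : ¬ G.Adj u w)
    (hG : IsPlanar G) (H2 : SimpleGraph {x : V // x ≠ v})
    (hH2 : ∀ a b, H2.Adj a b ↔
      (G.Adj a.1 b.1 ∨ (a.1 = u ∧ b.1 = w) ∨ (a.1 = w ∧ b.1 = u))) :
    IsPlanar H2 := by
  classical
  obtain ⟨pos, arc, hinj, hedge, hdis⟩ := hG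
  have huv : G.Adj u v := hvu.symm
  obtain ⟨e1c, e10, e11, e1i, e1a⟩ := hedge u v huv
  obtain ⟨e2c, e20, e21, e2i, e2a⟩ := hedge v w hvw
  have hAB : Disjoint (arc u v '' Ioo 0 1) (arc v w '' Ioo 0 1) := by
    refine hdis u v v w huv hvw ?_
    intro hcon
    rw [Sym2.eq_iff] at hcon
    rcases hcon with ⟨h1, h2⟩ | ⟨h1, h2⟩
    · exact hvu.ne' h1
    · exact huw h1
  set newarc : ℝ → ℝ × ℝ :=
    fun t => if t ≤ (1/2 : ℝ) then arc u v (2*t) else arc v w (2*t - 1) with hnew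
  have hval1 : ∀ t : ℝ, t ≤ 1/2 → newarc t = arc u v (2*t) := by
    intro t ht; rw [hnew]; exact if_pos ht
  have hval2 : ∀ t : ℝ, ¬(t ≤ 1/2) → newarc t = arc v w (2*t - 1) := by
    intro t ht; rw [hnew]; exact if_neg ht
  have hmideq : arc u v 1 = arc v w 0 := by rw [e11, e20]
  have hcont : Continuous newarc := by
    refine Continuous.if_le (e1c.comp (continuous_const.mul continuous_id))
      (e2c.comp ((continuous_const.mul continuous_id).sub continuous_const))
      continuous_id continuous_const ?_
    intro x hx
    change x = 1/2 at hx
    subst hx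
    norm_num [hmideq]
  have h0 : newarc 0 = pos u := by
    rw [hval1 0 (by norm_num)]; norm_num [e10]
  have h1 : newarc 1 = pos w := by
    rw [hval2 1 (by norm_num)]; norm_num [e21]
  have himg : newarc '' Ioo 0 1 ⊆ (arc u v '' Ioo 0 1) ∪ (arc v w '' Ioo 0 1) ∪ {pos v} := by
    rintro p ⟨t, ⟨ht0, ht1⟩, rfl⟩
    rcases le_or_gt t (1/2 : ℝ) with h | h
    · rcases lt_or_eq_of_le h with h' | h'
      · left; left
        exact ⟨2*t, ⟨by linarith, by linarith⟩, (hval1 t h).symm⟩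
      · right
        have : newarc t = arc u v 1 := by
          rw [hval1 t h, h']; norm_num
        rw [this, e11]; rfl
    · left; right
      exact ⟨2*t - 1, ⟨by linarith, by linarith⟩, (hval2 t (not_le.mpr h)).symm⟩
  have key2 : ∀ s t : ℝ, s ∈ Icc (0:ℝ) 1 → t ∈ Icc (0:ℝ) 1 → s ≤ 1/2 → ¬(t ≤ 1/2) →
      arc u v (2*s) = arc v w (2*t - 1) → False := by
    intro s t hs ht hs2 ht2 hEq
    rw [not_le] at ht2
    have h2t0 : 0 < 2*t - 1 := by linarith
    rcases lt_or_eq_of_le (show 2*t - 1 ≤ 1 by linarith [ht.2]) with hlt | heq1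
    · have hpB : arc v w (2*t - 1) ∈ arc v w '' Ioo 0 1 := ⟨_, ⟨h2t0, hlt⟩, rfl⟩
      rcases eq_or_lt_of_le hs.1 with h0s | h0s
      · have h2s : arc u v (2*s) = pos u := by rw [← h0s]; norm_num [e10]
        exact e2a u (h2s ▸ hEq ▸ hpB)
      · rcases lt_or_eq_of_le hs2 with hs2' | hs2'
        · exact Set.disjoint_left.mp hAB ⟨2*s, ⟨by linarith, by linarith⟩, rfl⟩ (hEq ▸ hpB)
        · have h2s : arc u v (2*s) = pos v := by rw [hs2']; norm_num [e11]
          exact e2a v (h2s ▸ hEq ▸ hpB)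
    · have hvalw : arc v w (2*t - 1) = pos w := by rw [heq1, e21]
      rcases eq_or_lt_of_le hs.1 with h0s | h0s
      · apply huw
        apply hinj
        have h2s : arc u v (2*s) = pos u := by rw [← h0s]; norm_num [e10]
        rw [← h2s, hEq, hvalw]
      · rcases lt_or_eq_of_le hs2 with hs2' | hs2'
        · exact e1a w ⟨2*s, ⟨by linarith, by linarith⟩, by rw [hEq, hvalw]⟩
        · apply hvw.ne
          apply hinj
          have h2s : arc u v (2*s) = pos v := by rw [hs2']; norm_num [e11]
          rw [← h2s, hEq, hvalw]
  have hinjOn : Set.InjOn newarc (Icc 0 1) := by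
    intro s hs t ht hEq
    by_cases h1' : s ≤ 1/2 <;> by_cases h2' : t ≤ 1/2
    · rw [hval1 s h1', hval1 t h2'] at hEq
      have := e1i ⟨by linarith [hs.1], by linarith⟩ ⟨by linarith [ht.1], by linarith⟩ hEq
      linarith
    · rw [hval1 s h1', hval2 t h2'] at hEq
      exact absurd hEq fun h => key2 s t hs ht h1' h2' h
    · rw [hval2 s h1', hval1 t h2'] at hEq
      exact absurd hEq.symm fun h => key2 t s ht hs h2' h1' h
    · rw [hval2 s h1', hval2 t h2'] at hEq
      rw [not_le] at h1' h2'
      have := e2i ⟨by linarith, by linarith [hs.2]⟩ ⟨by linarith, by linarith [ht.2]⟩ hEq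
      linarith
  have havoid : ∀ x : V, x ≠ v → pos x ∉ newarc '' Ioo 0 1 := by
    intro x hx hmem
    rcases himg hmem with (hA' | hB') | hv'
    · exact e1a x hA'
    · exact e2a x hB'
    · exact hx (hinj (Set.mem_singleton_iff.mp hv'))
  set revarc : ℝ → ℝ × ℝ := fun t => newarc (1 - t) with hrev
  have hrval : ∀ t : ℝ, revarc t = newarc (1 - t) := fun t => by rw [hrev]
  have hrc : Continuous revarc := by
    rw [hrev]; exact hcont.comp (continuous_const.sub continuous_id)
  have hr0 : revarc 0 = pos w := by rw [hrval]; norm_num [h1]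
  have hr1 : revarc 1 = pos u := by rw [hrval]; norm_num [h0]
  have hrimg : revarc '' Ioo 0 1 ⊆ newarc '' Ioo 0 1 := by
    rintro p ⟨t, ⟨ht0, ht1⟩, rfl⟩
    exact ⟨1 - t, ⟨by linarith, by linarith⟩, (hrval t).symm⟩
  have hrinj : Set.InjOn revarc (Icc 0 1) := by
    intro s hs t ht hEq
    rw [hrval, hrval] at hEq
    have := hinjOn (Set.mem_Icc.mpr ⟨by linarith [hs.2], by linarith [hs.1]⟩)
      (Set.mem_Icc.mpr ⟨by linarith [ht.2], by linarith [ht.1]⟩) hEq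
    linarith
  have hside : ∀ x y : V, x ≠ v → y ≠ v → G.Adj x y →
      ∀ p, p ∈ (arc u v '' Ioo 0 1) ∪ (arc v w '' Ioo 0 1) ∪ {pos v} →
        p ∉ arc x y '' Ioo 0 1 := by
    intro x y hx hy hxy p hp hq
    rcases hp with (hA' | hB') | hv'
    · refine Set.disjoint_left.mp (hdis u v x y huv hxy ?_) hA' hq
      intro hcon
      rw [Sym2.eq_iff] at hcon
      rcases hcon with ⟨h1', h2'⟩ | ⟨h1', h2'⟩
      · exact hy h2'.symm
      · exact hx h2'.symm
    · refine Set.disjoint_left.mp (hdis v w x y hvw hxy ?_) hB' hq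
      intro hcon
      rw [Sym2.eq_iff] at hcon
      rcases hcon with ⟨h1', h2'⟩ | ⟨h1', h2'⟩
      · exact hx h1'.symm
      · exact hy h1'.symm
    · rw [Set.mem_singleton_iff] at hv'
      subst hv'
      exact (hedge x y hxy).2.2.2.2 v hq
  set arc2 : {x : V // x ≠ v} → {x : V // x ≠ v} → ℝ → ℝ × ℝ :=
    fun a b => if a.1 = u ∧ b.1 = w then newarc
      else if a.1 = w ∧ b.1 = u then revarc else arc a.1 b.1 with harc2
  have htri : ∀ a b : {x : V // x ≠ v}, H2.Adj a b →
      (a.1 = u ∧ b.1 = w ∧ arc2 a b = newarc) ∨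
      (a.1 = w ∧ b.1 = u ∧ arc2 a b = revarc) ∨
      (G.Adj a.1 b.1 ∧ arc2 a b = arc a.1 b.1) := by
    intro a b hab
    by_cases hc1 : a.1 = u ∧ b.1 = w
    · refine Or.inl ⟨hc1.1, hc1.2, ?_⟩
      show (if a.1 = u ∧ b.1 = w then newarc
        else if a.1 = w ∧ b.1 = u then revarc else arc a.1 b.1) = newarc
      rw [if_pos hc1]
    · by_cases hc2 : a.1 = w ∧ b.1 = u
      · refine Or.inr (Or.inl ⟨hc2.1, hc2.2, ?_⟩)
        show (if a.1 = u ∧ b.1 = w then newarc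
          else if a.1 = w ∧ b.1 = u then revarc else arc a.1 b.1) = revarc
        rw [if_neg hc1, if_pos hc2]
      · refine Or.inr (Or.inr ⟨?_, ?_⟩)
        · rcases (hH2 a b).mp hab with h | h | h
          · exact h
          · exact absurd h hc1
          · exact absurd h hc2
        · show (if a.1 = u ∧ b.1 = w then newarc
            else if a.1 = w ∧ b.1 = u then revarc else arc a.1 b.1) = arc a.1 b.1
          rw [if_neg hc1, if_neg hc2]
  refine ⟨fun a => pos a.1, arc2, hinj.comp Subtype.val_injective, ?_, ?_⟩
  · intro a b hab
    rcases htri a b hab with ⟨ha', hb', he⟩ | ⟨ha', hb', he⟩ | ⟨hG', he⟩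
    · rw [he]
      refine ⟨hcont, ?_, ?_, hinjOn, fun z => havoid z.1 z.2⟩
      · show newarc 0 = pos a.1
        rw [ha']; exact h0
      · show newarc 1 = pos b.1
        rw [hb']; exact h1
    · rw [he]
      refine ⟨hrc, ?_, ?_, hrinj, fun z hz => havoid z.1 z.2 (hrimg hz)⟩
      · show revarc 0 = pos a.1
        rw [ha']; exact hr0
      · show revarc 1 = pos b.1
        rw [hb']; exact hr1
    · rw [he]
      obtain ⟨c1, c2, c3, c4, c5⟩ := hedge a.1 b.1 hG'
      exact ⟨c1, c2, c3, c4, fun z => c5 z.1⟩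
  · intro a b x y hab hxy hne
    rcases htri a b hab with ⟨ha', hb', he⟩ | ⟨ha', hb', he⟩ | ⟨hGab, he⟩ <;>
      rcases htri x y hxy with ⟨hx', hy', hf⟩ | ⟨hx', hy', hf⟩ | ⟨hGxy, hf⟩
    · exfalso
      apply hne
      rw [Subtype.ext (ha'.trans hx'.symm : a.1 = x.1),
        Subtype.ext (hb'.trans hy'.symm : b.1 = y.1)]
    · exfalso
      apply hne
      rw [Subtype.ext (ha'.trans hy'.symm : a.1 = y.1),
        Subtype.ext (hb'.trans hx'.symm : b.1 = x.1), Sym2.eq_swap]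
    · rw [he, hf]
      exact Set.disjoint_left.mpr fun p hp hq =>
        hside x.1 y.1 x.2 y.2 hGxy p (himg hp) hq
    · exfalso
      apply hne
      rw [Subtype.ext (ha'.trans hy'.symm : a.1 = y.1),
        Subtype.ext (hb'.trans hx'.symm : b.1 = x.1), Sym2.eq_swap]
    · exfalso
      apply hne
      rw [Subtype.ext (ha'.trans hx'.symm : a.1 = x.1),
        Subtype.ext (hb'.trans hy'.symm : b.1 = y.1)]
    · rw [he, hf]
      exact Set.disjoint_left.mpr fun p hp hq =>
        hside x.1 y.1 x.2 y.2 hGxy p (himg (hrimg hp)) hq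
    · rw [he, hf]
      exact Set.disjoint_left.mpr fun p hp hq =>
        hside a.1 b.1 a.2 b.2 hGab p (himg hq) hp
    · rw [he, hf]
      exact Set.disjoint_left.mpr fun p hp hq =>
        hside a.1 b.1 a.2 b.2 hGab p (himg (hrimg hq)) hp
    · rw [he, hf]
      refine hdis a.1 b.1 x.1 y.1 hGab hGxy ?_
      intro hcon
      rw [Sym2.eq_iff] at hcon
      apply hne
      rw [Sym2.eq_iff]
      rcases hcon with ⟨h1', h2'⟩ | ⟨h1', h2'⟩
      · exact Or.inl ⟨Subtype.ext h1', Subtype.ext h2'⟩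
      · exact Or.inr ⟨Subtype.ext h1', Subtype.ext h2'⟩

end Reroute

/-- A minimal counterexample has no vertex of degree 1 and no vertex of degree 2. -/
theorem stmt11 {V : Type*} [Fintype V] (G : SimpleGraph V) (Δ : ℕ) (hΔ : 9 ≤ Δ)
    (hmin : MinimalCex Δ G) :
    ∀ v : V, degN G v ≠ 1 ∧ degN G v ≠ 2 := by
  classical
  intro v
  have hmax := hmin.2.1.1
  have hchi := hmin.2.2.1
  constructor
  · -- degree 1
    intro hdv
    obtain ⟨u', hu'⟩ := Nat.card_eq_one_iff_exists.mp hdv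
    obtain ⟨u, hvu⟩ := u'
    have hNv : ∀ x, G.Adj v x → x = u := fun x hx => congrArg Subtype.val (hu' ⟨x, hx⟩)
    let H1 : SimpleGraph {x : V // x ≠ v} :=
      { Adj := fun a b => G.Adj a.1 b.1
        symm := ⟨fun a b h => h.symm⟩
        loopless := ⟨fun a h => G.irrefl h⟩ }
    have hp : IsPlanar H1 :=
      isPlanar_of_map G H1 Subtype.val Subtype.val_injective (fun a b h => h) hmin.1
    have hd : ∀ a, degN H1 a ≤ Δ := by
      intro a
      refine le_trans (Nat.card_le_card_of_injective
        (fun b : {b // H1.Adj a b} => (⟨b.1.1, b.2⟩ : {x // G.Adj a.1 x})) ?_) (hmax a.1)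
      intro b b' h
      have h2 : b.1.1 = b'.1.1 := by
        have h3 := congrArg Subtype.val h
        simpa using h3
      exact Subtype.ext (Subtype.ext h2)
    obtain ⟨c⟩ := key_colorable G Δ hmin v H1 hp hd
    set T : Finset V := insert u {x | G.Adj u x}.toFinset with hT
    have hTcard : T.card ≤ Δ + 1 := by
      refine le_trans (Finset.card_insert_le _ _) ?_
      have h1 : {x | G.Adj u x}.toFinset.card = degN G u := by
        rw [← Set.ncard_eq_toFinset_card']; exact degN_eq_ncard G u
      have := hmax u
      omega
    set g : V → Fin (2*Δ+7) := fun x => if h : x = v then ⟨0, by omega⟩ else c ⟨x, h⟩ with hg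
    have hforb : ∃ f0 : Fin (2*Δ+7), f0 ∉ T.image g := by
      by_contra hcon
      push_neg at hcon
      have hsub : (Finset.univ : Finset (Fin (2*Δ+7))) ⊆ T.image g := fun x _ => hcon x
      have h2 := Finset.card_le_card hsub
      have h3 := Finset.card_image_le (s := T) (f := g)
      rw [Finset.card_univ, Fintype.card_fin] at h2
      omega
    obtain ⟨f0, hf0⟩ := hforb
    set c' : V → Fin (2*Δ+7) := fun x => if h : x = v then f0 else c ⟨x, h⟩ with hc'
    have hc'v : c' v = f0 := by rw [hc']; simp
    have hc'x : ∀ (x) (h : x ≠ v), c' x = c ⟨x, h⟩ := by intro x h; rw [hc']; simp [h]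
    have hgx : ∀ (x) (h : x ≠ v), g x = c ⟨x, h⟩ := by intro x h; rw [hg]; simp [h]
    have main : ∀ b, b ≠ v → G.square.Adj v b → c' b ≠ f0 := by
      intro b hb hadj
      have hbT : b ∈ T := by
        rcases hadj.2 with h | ⟨z, h1, h2⟩
        · rw [hNv b h]; exact Finset.mem_insert_self _ _
        · have hz := hNv z h1
          subst hz
          exact Finset.mem_insert_of_mem (Set.mem_toFinset.mpr h2)
      rw [hc'x b hb]
      intro hEq
      apply hf0
      rw [← hEq, ← hgx b hb]
      exact Finset.mem_image_of_mem g hbT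
    have hvalid : ∀ {x y : V}, G.square.Adj x y → c' x ≠ c' y := by
      intro x y hadj
      by_cases hx : x = v
      · have hadj' : G.square.Adj v y := hx ▸ hadj
        have hy : y ≠ v := fun h => hadj'.1 h.symm
        rw [hx, hc'v]
        exact fun h => main y hy hadj' h.symm
      · by_cases hy : y = v
        · have hadj' : G.square.Adj v x := hy ▸ hadj.symm
          rw [hy, hc'v]
          exact main x hx hadj' 
        · have hH : H1.square.Adj ⟨x, hx⟩ ⟨y, hy⟩ := by
            refine ⟨fun h => hadj.1 (congrArg Subtype.val h), ?_⟩
            rcases hadj.2 with h | ⟨z, h1, h2⟩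
            · exact Or.inl h
            · by_cases hz : z = v
              · subst hz
                have hx' := hNv x h1.symm
                have hy' := hNv y h2
                exact absurd (hx'.trans hy'.symm) hadj.1
              · exact Or.inr ⟨⟨z, hz⟩, h1, h2⟩
          rw [hc'x x hx, hc'x y hy]
          exact c.valid hH
    have hcol : G.square.Colorable (2*Δ+7) := ⟨SimpleGraph.Coloring.mk c' hvalid⟩
    exact absurd hcol.chromaticNumber_le (not_le.mpr hchi)
  · -- degree 2
    intro hdv
    obtain ⟨u', w', huw', hcov⟩ := Nat.card_eq_two_iff.mp hdv
    obtain ⟨u, hvu⟩ := u'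
    obtain ⟨w, hvw⟩ := w'
    have huw : u ≠ w := fun h => huw' (Subtype.ext h)
    have hNv : ∀ x, G.Adj v x → x = u ∨ x = w := by
      intro x hx
      have hmem : (⟨x, hx⟩ : {y // G.Adj v y}) ∈
          ({⟨u, hvu⟩, ⟨w, hvw⟩} : Set {y // G.Adj v y}) := by
        rw [hcov]; exact Set.mem_univ _
      rcases hmem with h | h
      · exact Or.inl (congrArg Subtype.val h)
      · exact Or.inr (congrArg Subtype.val h)
    let H2 : SimpleGraph {x : V // x ≠ v} :=
      { Adj := fun a b => G.Adj a.1 b.1 ∨ (a.1 = u ∧ b.1 = w) ∨ (a.1 = w ∧ b.1 = u)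
        symm := by
          constructor
          rintro a b (h | ⟨h1, h2⟩ | ⟨h1, h2⟩)
          · exact Or.inl h.symm
          · exact Or.inr (Or.inr ⟨h2, h1⟩)
          · exact Or.inr (Or.inl ⟨h2, h1⟩)
        loopless := by
          constructor
          rintro a (h | ⟨h1, h2⟩ | ⟨h1, h2⟩)
          · exact G.irrefl h
          · exact huw (h1.symm.trans h2)
          · exact huw (h2.symm.trans h1) }
    have hH2adj : ∀ a b, H2.Adj a b ↔
        (G.Adj a.1 b.1 ∨ (a.1 = u ∧ b.1 = w) ∨ (a.1 = w ∧ b.1 = u)) := fun a b => Iff.rfl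
    have hp : IsPlanar H2 := by
      by_cases hGuw : G.Adj u w
      · refine isPlanar_of_map G H2 Subtype.val Subtype.val_injective ?_ hmin.1
        rintro a b (h | ⟨h1, h2⟩ | ⟨h1, h2⟩)
        · exact h
        · rw [h1, h2]; exact hGuw
        · rw [h1, h2]; exact hGuw.symm
      · exact isPlanar_reroute G v u w hvu hvw huw hGuw hmin.1 H2 hH2adj
    have hd : ∀ a, degN H2 a ≤ Δ := by
      intro a
      have hrepl : ∀ b : {b // H2.Adj a b}, ¬ G.Adj a.1 b.1.1 → G.Adj a.1 v := by
        intro b hnadj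
        rcases b.2 with h | ⟨h1, h2⟩ | ⟨h1, h2⟩
        · exact absurd h hnadj
        · rw [h1]; exact hvu.symm
        · rw [h1]; exact hvw.symm
      set f : {b // H2.Adj a b} → {x // G.Adj a.1 x} := fun b =>
        if h : G.Adj a.1 b.1.1 then ⟨b.1.1, h⟩ else ⟨v, hrepl b h⟩ with hf
      refine le_trans (Nat.card_le_card_of_injective f ?_) (hmax a.1)
      intro b b' hEq
      by_cases h : G.Adj a.1 b.1.1 <;> by_cases h' : G.Adj a.1 b'.1.1
      · rw [hf] at hEq
        simp only [dif_pos h, dif_pos h'] at hEq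
        have h2 : b.1.1 = b'.1.1 := by
          have h3 := congrArg Subtype.val hEq
          simpa using h3
        exact Subtype.ext (Subtype.ext h2)
      · rw [hf] at hEq
        simp only [dif_pos h, dif_neg h'] at hEq
        have h2 : b.1.1 = v := Subtype.ext_iff.mp hEq
        exact absurd h2 b.1.2
      · rw [hf] at hEq
        simp only [dif_neg h, dif_pos h'] at hEq
        have h2 : v = b'.1.1 := Subtype.ext_iff.mp hEq
        exact absurd h2.symm b'.1.2
      · have hbval : b.1.1 = b'.1.1 := by
          rcases b.2 with hb | ⟨hb1, hb2⟩ | ⟨hb1, hb2⟩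
          · exact absurd hb h
          all_goals {
            rcases b'.2 with hb' | ⟨hb1', hb2'⟩ | ⟨hb1', hb2'⟩
            · exact absurd hb' h'
            · first
                | exact hb2.trans hb2'.symm
                | exact absurd (hb1.symm.trans hb1') huw.symm
            · first
                | exact hb2.trans hb2'.symm
                | exact absurd (hb1.symm.trans hb1') huw }
        exact Subtype.ext (Subtype.ext hbval)
    obtain ⟨c⟩ := key_colorable G Δ hmin v H2 hp hd
    set T : Finset V := insert u (insert w
      ({x | G.Adj u x}.toFinset ∪ {x | G.Adj w x}.toFinset)) with hT
    have hTcard : T.card ≤ 2*Δ + 2 := by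
      refine le_trans (Finset.card_insert_le _ _) ?_
      have h0 := Finset.card_insert_le w
        ({x | G.Adj u x}.toFinset ∪ {x | G.Adj w x}.toFinset)
      have h1 := Finset.card_union_le {x | G.Adj u x}.toFinset {x | G.Adj w x}.toFinset
      have h2 : {x | G.Adj u x}.toFinset.card = degN G u := by
        rw [← Set.ncard_eq_toFinset_card']; exact degN_eq_ncard G u
      have h3 : {x | G.Adj w x}.toFinset.card = degN G w := by
        rw [← Set.ncard_eq_toFinset_card']; exact degN_eq_ncard G w
      have h4 := hmax u
      have h5 := hmax w
      omega
    set g : V → Fin (2*Δ+7) := fun x => if h : x = v then ⟨0, by omega⟩ else c ⟨x, h⟩ with hg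
    have hforb : ∃ f0 : Fin (2*Δ+7), f0 ∉ T.image g := by
      by_contra hcon
      push_neg at hcon
      have hsub : (Finset.univ : Finset (Fin (2*Δ+7))) ⊆ T.image g := fun x _ => hcon x
      have h2 := Finset.card_le_card hsub
      have h3 := Finset.card_image_le (s := T) (f := g)
      rw [Finset.card_univ, Fintype.card_fin] at h2
      omega
    obtain ⟨f0, hf0⟩ := hforb
    set c' : V → Fin (2*Δ+7) := fun x => if h : x = v then f0 else c ⟨x, h⟩ with hc'
    have hc'v : c' v = f0 := by rw [hc']; simp
    have hc'x : ∀ (x) (h : x ≠ v), c' x = c ⟨x, h⟩ := by intro x h; rw [hc']; simp [h]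
    have hgx : ∀ (x) (h : x ≠ v), g x = c ⟨x, h⟩ := by intro x h; rw [hg]; simp [h]
    have main : ∀ b, b ≠ v → G.square.Adj v b → c' b ≠ f0 := by
      intro b hb hadj
      have hbT : b ∈ T := by
        rcases hadj.2 with h | ⟨z, h1, h2⟩
        · rcases hNv b h with h' | h'
          · rw [h']; exact Finset.mem_insert_self _ _
          · rw [h']; exact Finset.mem_insert_of_mem (Finset.mem_insert_self _ _)
        · rcases hNv z h1 with h' | h' <;> subst h'
          · exact Finset.mem_insert_of_mem (Finset.mem_insert_of_mem
              (Finset.mem_union_left _ (Set.mem_toFinset.mpr h2)))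
          · exact Finset.mem_insert_of_mem (Finset.mem_insert_of_mem
              (Finset.mem_union_right _ (Set.mem_toFinset.mpr h2)))
      rw [hc'x b hb]
      intro hEq
      apply hf0
      rw [← hEq, ← hgx b hb]
      exact Finset.mem_image_of_mem g hbT
    have hvalid : ∀ {x y : V}, G.square.Adj x y → c' x ≠ c' y := by
      intro x y hadj
      by_cases hx : x = v
      · have hadj' : G.square.Adj v y := hx ▸ hadj
        have hy : y ≠ v := fun h => hadj'.1 h.symm
        rw [hx, hc'v]
        exact fun h => main y hy hadj' h.symm
      · by_cases hy : y = v
        · have hadj' : G.square.Adj v x := hy ▸ hadj.symm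
          rw [hy, hc'v]
          exact main x hx hadj' 
        · have hH : H2.square.Adj ⟨x, hx⟩ ⟨y, hy⟩ := by
            refine ⟨fun h => hadj.1 (congrArg Subtype.val h), ?_⟩
            rcases hadj.2 with h | ⟨z, h1, h2⟩
            · exact Or.inl (Or.inl h)
            · by_cases hz : z = v
              · subst hz
                rcases hNv x h1.symm with hx' | hx' <;> rcases hNv y h2 with hy' | hy'
                · exact absurd (hx'.trans hy'.symm) hadj.1
                · exact Or.inl (Or.inr (Or.inl ⟨hx', hy'⟩))
                · exact Or.inl (Or.inr (Or.inr ⟨hx', hy'⟩))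
                · exact absurd (hx'.trans hy'.symm) hadj.1
              · exact Or.inr ⟨⟨z, hz⟩, Or.inl h1, Or.inl h2⟩
          rw [hc'x x hx, hc'x y hy]
          exact c.valid hH
    have hcol : G.square.Colorable (2*Δ+7) := ⟨SimpleGraph.Coloring.mk c' hvalid⟩
    exact absurd hcol.chromaticNumber_le (not_le.mpr hchi)
end

section
/- Let G be a minimal counterexample (fewest vertices, then most edges) among planar graphs of maximum degree Δ ≥ 9 with χ₂(G) > 2Δ + 7. Then G does not contain a vertex v of degree 3 that is incident to two triangular faces and adjacent to a vertex of degree at most min(10, Δ). -/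
open SimpleGraph

section Comb

variable {V : Type*} [Fintype V] [DecidableEq V] (G : SimpleGraph V) [DecidableRel G.Adj]

/-- The involution exchanging the two darts of each edge. -/
def dartSymmPerm : Equiv.Perm G.Dart :=
  ⟨SimpleGraph.Dart.symm, SimpleGraph.Dart.symm,
    fun d => d.symm_symm, fun d => d.symm_symm⟩

/-- A combinatorial plane embedding (rotation system) of `G`: a permutation of the darts
whose cycles are exactly the sets of darts sharing a tail vertex. -/
structure PlaneEmbedding where
  rot : Equiv.Perm G.Dart
  same_vertex : ∀ d d' : G.Dart, rot.SameCycle d d' ↔ d.toProd.1 = d'.toProd.1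

variable {G}

/-- The face-tracing permutation of an embedding. -/
def PlaneEmbedding.facePerm (e : PlaneEmbedding G) : Equiv.Perm G.Dart :=
  e.rot * dartSymmPerm G

/-- Darts lying on the same face. -/
def PlaneEmbedding.faceSetoid (e : PlaneEmbedding G) : Setoid G.Dart :=
  ⟨e.facePerm.SameCycle,
    ⟨fun _ => Equiv.Perm.SameCycle.refl _ _, fun h => h.symm, fun h h' => h.trans h'⟩⟩

/-- The faces of an embedding: orbits of the face-tracing permutation on darts. -/
def PlaneEmbedding.Faces (e : PlaneEmbedding G) : Type _ := Quotient e.faceSetoid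

/-- The degree of a face: the number of darts on it (so cut-edges count twice). -/
noncomputable def PlaneEmbedding.faceDeg (e : PlaneEmbedding G) (f : e.Faces) : ℕ :=
  Nat.card {d : G.Dart // Quotient.mk e.faceSetoid d = f}

/-- A vertex is incident to a face if some dart of the face has it as tail. -/
def PlaneEmbedding.VertexOnFace (e : PlaneEmbedding G) (v : V) (f : e.Faces) : Prop :=
  ∃ d : G.Dart, d.toProd.1 = v ∧ Quotient.mk e.faceSetoid d = f

/-- A vertex is triangulated if all its incident faces are triangles. -/
def PlaneEmbedding.Triangulated (e : PlaneEmbedding G) (v : V) : Prop :=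
  ∀ f : e.Faces, e.VertexOnFace v f → e.faceDeg f = 3

noncomputable instance (e : PlaneEmbedding G) : Fintype e.Faces :=
  @Fintype.ofFinite _ (Quotient.finite _)

/-- The embedding is on the sphere: Euler's formula holds. -/
def PlaneEmbedding.IsSphere (e : PlaneEmbedding G) : Prop :=
  (Fintype.card V : ℤ) - G.edgeFinset.card + Nat.card e.Faces = 2

end Comb

lemma square_adj_iff {V : Type*} (G : SimpleGraph V) (u v : V) :
    G.square.Adj u v ↔ u ≠ v ∧ (G.Adj u v ∨ ∃ w, G.Adj u w ∧ G.Adj w v) := Iff.rfl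

section Lemmas

open Equiv SimpleGraph

lemma orbit3 {α : Type*} [Fintype α] [DecidableEq α] (σ : Equiv.Perm α) (d : α)
    (h : Nat.card {x // σ.SameCycle d x} = 3) :
    σ (σ (σ d)) = d ∧ σ d ≠ d ∧ σ (σ d) ≠ d := by
  have hfix : σ d ≠ d := by
    intro hf
    have hall : ∀ x : α, σ.SameCycle d x → x = d := by
      rintro x ⟨n, rfl⟩
      exact Equiv.Perm.zpow_apply_eq_self_of_apply_eq_self hf n
    have h1 : Nat.card {x // σ.SameCycle d x} = 1 := by
      rw [Nat.card_eq_one_iff_unique]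
      exact ⟨⟨fun a b => Subtype.ext ((hall a a.2).trans (hall b b.2).symm)⟩,
        ⟨⟨d, Equiv.Perm.SameCycle.refl _ _⟩⟩⟩
    omega
  have hdsupp : d ∈ σ.support := Equiv.Perm.mem_support.2 hfix
  have hsupp : (σ.cycleOf d).support = Finset.univ.filter (fun x => σ.SameCycle d x) := by
    ext y
    rw [Equiv.Perm.mem_support_cycleOf_iff]
    simp [hdsupp]
  have hcard : (σ.cycleOf d).support.card = 3 := by
    rw [hsupp]
    rw [← h, Nat.card_eq_fintype_card, Fintype.card_subtype]
  have hcyc : (σ.cycleOf d).IsCycle := Equiv.Perm.isCycle_cycleOf σ hfix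
  have hord : orderOf (σ.cycleOf d) = 3 := by rw [hcyc.orderOf, hcard]
  have hpow : (σ.cycleOf d) ^ 3 = 1 := by rw [← hord]; exact pow_orderOf_eq_one _
  have h3 : σ (σ (σ d)) = d := by
    have := Equiv.Perm.cycleOf_pow_apply_self σ d 3
    rw [hpow] at this
    simpa [pow_succ, Equiv.Perm.mul_apply] using this.symm
  refine ⟨h3, hfix, fun h2 => hfix ?_⟩
  have := congrArg σ h2
  rw [h3] at this
  exact this.symm

variable {V : Type*} [Fintype V] [DecidableEq V] {G : SimpleGraph V} [DecidableRel G.Adj]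

lemma rot_fst (e : PlaneEmbedding G) (d : G.Dart) : (e.rot d).fst = d.fst :=
  ((e.same_vertex d (e.rot d)).mp ⟨1, by simp⟩).symm

lemma facePerm_fst (e : PlaneEmbedding G) (d : G.Dart) : (e.facePerm d).fst = d.snd := by
  show (e.rot (dartSymmPerm G d)).fst = d.snd
  rw [rot_fst]
  rfl

lemma face_tri (e : PlaneEmbedding G) (f : e.Faces) (h3 : e.faceDeg f = 3) (v : V)
    (hv : e.VertexOnFace v f) :
    ∃ (x p : V) (hvx : G.Adj v x) (hpv : G.Adj p v),
      G.Adj x p ∧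
      Quotient.mk e.faceSetoid (SimpleGraph.Dart.mk (v, x) hvx) = f ∧
      e.rot (SimpleGraph.Dart.mk (v, p) hpv.symm) = SimpleGraph.Dart.mk (v, x) hvx := by
  obtain ⟨d₀, hd₀v, hd₀f⟩ := hv
  set σ := e.facePerm with hσ
  have hcard : Nat.card {x // σ.SameCycle d₀ x} = 3 := by
    rw [← h3]
    unfold PlaneEmbedding.faceDeg
    apply Nat.card_congr
    apply Equiv.subtypeEquivRight
    intro d'
    rw [← hd₀f]
    constructor
    · intro h; exact (Quotient.eq.mpr h.symm)
    · intro h; exact (Quotient.eq.mp h).symm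
  obtain ⟨h3d, hne1, hne2⟩ := orbit3 σ d₀ hcard
  -- d₀ = (v, x)
  set x := d₀.snd with hx
  have hd₀ : d₀ = SimpleGraph.Dart.mk (v, x) (hd₀v ▸ d₀.adj) := by
    apply SimpleGraph.Dart.ext
    exact Prod.ext hd₀v rfl
  set d₁ := σ d₀ with hd₁
  set d₂ := σ d₁ with hd₂
  set p := d₁.snd with hp
  have hd₁fst : d₁.fst = x := facePerm_fst e d₀
  have hd₂fst : d₂.fst = p := facePerm_fst e d₁
  have hd₂snd : d₂.snd = v := by
    have := facePerm_fst e d₂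
    rw [show σ d₂ = d₀ from h3d] at this
    rw [← this, hd₀v]
  have hd₂eq : d₂ = SimpleGraph.Dart.mk (p, v) (hd₂fst ▸ hd₂snd ▸ d₂.adj) := by
    apply SimpleGraph.Dart.ext
    exact Prod.ext hd₂fst hd₂snd
  have hd₁eq : d₁ = SimpleGraph.Dart.mk (x, p) (hd₁fst ▸ d₁.adj) := by
    apply SimpleGraph.Dart.ext
    exact Prod.ext hd₁fst rfl
  refine ⟨x, p, hd₀v ▸ d₀.adj, hd₂fst ▸ hd₂snd ▸ d₂.adj, hd₁fst ▸ d₁.adj, ?_, ?_⟩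
  · rw [← hd₀]; exact hd₀f
  · have : σ d₂ = d₀ := h3d
    have hsymm : (dartSymmPerm G) d₂ = SimpleGraph.Dart.mk (v, p)
        (show G.Adj p v from hd₂fst ▸ hd₂snd ▸ d₂.adj).symm := by
      apply SimpleGraph.Dart.ext
      show d₂.toProd.swap = (v, p)
      rw [Prod.ext_iff]
      exact ⟨hd₂snd, hd₂fst⟩
    have : e.rot ((dartSymmPerm G) d₂) = d₀ := h3d
    rw [hsymm] at this
    rw [this, ← hd₀]

end Lemmas
section Lemmas2
open Equiv SimpleGraph
variable {V : Type*} [Fintype V] [DecidableEq V] {G : SimpleGraph V} [DecidableRel G.Adj]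

omit [Fintype V] [DecidableEq V] [DecidableRel G.Adj] in
lemma mem_pair_of_sameCycle {α : Type*} (σ : Equiv.Perm α) (a : α) (h : σ (σ a) = a)
    (b : α) (hb : σ.SameCycle a b) : b = a ∨ b = σ a := by
  obtain ⟨n, rfl⟩ := hb
  have hn : n % 2 = 0 ∨ n % 2 = 1 := Int.emod_two_eq_zero_or_one n
  have hdecomp : σ ^ n = σ ^ (n % 2) * (σ ^ (2:ℤ)) ^ (n / 2) := by
    rw [← zpow_mul, ← zpow_add]; congr 1; omega
  have hfix2 : ((σ ^ (2:ℤ)) ^ (n / 2)) a = a := by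
    have h2 : (σ ^ (2:ℤ)) a = a := by
      rw [show (2:ℤ) = ((2:ℕ):ℤ) by norm_num, zpow_natCast]
      simpa [pow_succ, Equiv.Perm.mul_apply] using h
    exact Equiv.Perm.zpow_apply_eq_self_of_apply_eq_self h2 _
  rw [hdecomp, Equiv.Perm.mul_apply, hfix2]
  rcases hn with h0 | h0 <;> rw [h0]
  · left; simp
  · right; simp

lemma degN_eq_degree (v : V) : degN G v = G.degree v := by
  rw [degN, Nat.card_eq_fintype_card, ← SimpleGraph.card_neighborSet_eq_degree]
  exact Fintype.card_congr (Equiv.subtypeEquivRight fun u => (G.mem_neighborSet v u).symm)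

lemma two_edges (e : PlaneEmbedding G) (v : V) (hdeg : degN G v = 3)
    (f₁ f₂ : e.Faces) (hne : f₁ ≠ f₂) (hf1 : e.faceDeg f₁ = 3) (hf2 : e.faceDeg f₂ = 3)
    (hv1 : e.VertexOnFace v f₁) (hv2 : e.VertexOnFace v f₂) :
    ∃ a b c : V, a ≠ b ∧ b ≠ c ∧ a ≠ c ∧ G.Adj v a ∧ G.Adj v b ∧ G.Adj v c ∧
      G.Adj a b ∧ G.Adj b c := by
  obtain ⟨x₁, p₁, hvx₁, hp₁v, hx₁p₁, hmem₁, hrot₁⟩ := face_tri e f₁ hf1 v hv1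
  obtain ⟨x₂, p₂, hvx₂, hp₂v, hx₂p₂, hmem₂, hrot₂⟩ := face_tri e f₂ hf2 v hv2
  have hdv : (G.neighborFinset v).card = 3 := by rw [← hdeg, degN_eq_degree]; rfl
  have hx₁ne : x₁ ≠ p₁ := hx₁p₁.ne
  have hx₂ne : x₂ ≠ p₂ := hx₂p₂.ne
  by_cases h1 : x₂ = x₁
  · by_cases h2 : p₂ = p₁
    · exfalso
      apply hne
      rw [← hmem₁, ← hmem₂]
      congr 1
      apply SimpleGraph.Dart.ext
      exact Prod.ext rfl h1.symm
    · rw [h1] at hx₂p₂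
      exact ⟨p₁, x₁, p₂, hx₁ne.symm, hx₂p₂.ne, fun h => h2 h.symm, hp₁v.symm, hvx₁,
        hp₂v.symm, hx₁p₁.symm, hx₂p₂⟩
  · by_cases h2 : x₂ = p₁
    · by_cases h3 : p₂ = x₁
      · -- Case C : rotation cycle at v has only 2 darts, contradiction with degree 3
        exfalso
        set dX : G.Dart := SimpleGraph.Dart.mk (v, x₁) hvx₁ with hdX
        set dP : G.Dart := SimpleGraph.Dart.mk (v, p₁) hp₁v.symm with hdP
        have hr1 : e.rot dP = dX := hrot₁
        have hr2 : e.rot dX = dP := by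
          have hd : SimpleGraph.Dart.mk (v, p₂) hp₂v.symm = dX := by
            apply SimpleGraph.Dart.ext
            exact Prod.ext rfl h3
          have hd' : SimpleGraph.Dart.mk (v, x₂) hvx₂ = dP := by
            apply SimpleGraph.Dart.ext
            exact Prod.ext rfl h2
          rw [← hd, hrot₂, hd']
        have hsq : e.rot (e.rot dX) = dX := by rw [hr2, hr1]
        -- third neighbor
        have hz : ∃ z ∈ G.neighborFinset v, z ∉ ({x₁, p₁} : Finset V) := by
          by_contra hcon
          push_neg at hcon
          have hsub : G.neighborFinset v ⊆ {x₁, p₁} := hcon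
          have hA := Finset.card_le_card hsub
          have hB : ({x₁, p₁} : Finset V).card ≤ 2 :=
            (Finset.card_insert_le _ _).trans (by simp)
          omega
        obtain ⟨z, hzmem, hznot⟩ := hz
        have hvz : G.Adj v z := (G.mem_neighborFinset v z).mp hzmem
        set dZ : G.Dart := SimpleGraph.Dart.mk (v, z) hvz with hdZ
        have hsc : e.rot.SameCycle dX dZ := (e.same_vertex dX dZ).mpr rfl
        rcases mem_pair_of_sameCycle e.rot dX hsq dZ hsc with h | h
        · apply hznot
          have : z = x₁ := congrArg (fun d : G.Dart => d.toProd.2) h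
          simp [this]
        · apply hznot
          rw [hr2] at h
          have : z = p₁ := congrArg (fun d : G.Dart => d.toProd.2) h
          simp [this]
      · rw [h2] at hx₂p₂
        exact ⟨x₁, p₁, p₂, hx₁ne, hx₂p₂.ne, fun h => h3 h.symm, hvx₁, hp₁v.symm,
          hp₂v.symm, hx₁p₁, hx₂p₂⟩
    · by_cases h3 : p₂ = x₁
      · rw [h3] at hx₂p₂
        exact ⟨x₂, x₁, p₁, h1, hx₁ne, h2, hvx₂, hvx₁, hp₁v.symm, hx₂p₂, hx₁p₁⟩
      · by_cases h4 : p₂ = p₁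
        · rw [h4] at hx₂p₂
          exact ⟨x₁, p₁, x₂, hx₁ne, fun h => h2 h.symm, fun h => h1 h.symm, hvx₁, hp₁v.symm,
            hvx₂, hx₁p₁, hx₂p₂.symm⟩
        · exfalso
          have hsub : ({x₁, p₁, x₂, p₂} : Finset V) ⊆ G.neighborFinset v := by
            intro y hy
            simp only [Finset.mem_insert, Finset.mem_singleton] at hy
            rw [G.mem_neighborFinset]
            rcases hy with rfl | rfl | rfl | rfl
            exacts [hvx₁, hp₁v.symm, hvx₂, hp₂v.symm]
          have hcard4 : ({x₁, p₁, x₂, p₂} : Finset V).card = 4 := by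
            have hm1 : x₁ ∉ ({p₁, x₂, p₂} : Finset V) := by
              simp only [Finset.mem_insert, Finset.mem_singleton]
              push_neg
              exact ⟨hx₁ne, fun h => h1 h.symm, fun h => h3 h.symm⟩
            have hm2 : p₁ ∉ ({x₂, p₂} : Finset V) := by
              simp only [Finset.mem_insert, Finset.mem_singleton]
              push_neg
              exact ⟨fun h => h2 h.symm, fun h => h4 h.symm⟩
            have hm3 : x₂ ∉ ({p₂} : Finset V) := by simp [hx₂ne]
            rw [Finset.card_insert_of_notMem hm1, Finset.card_insert_of_notMem hm2,
              Finset.card_insert_of_notMem hm3, Finset.card_singleton]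
          have := Finset.card_le_card hsub
          omega

end Lemmas2
section Lemmas3
open SimpleGraph

lemma isPlanar_comap {V W : Type*} (G : SimpleGraph V) (f : W → V)
    (hf : Function.Injective f) (h : IsPlanar G) : IsPlanar (G.comap f) := by
  obtain ⟨pos, arc, hinj, hedge, hdisj⟩ := h
  refine ⟨pos ∘ f, fun u v => arc (f u) (f v), hinj.comp hf, ?_, ?_⟩
  · intro u v huv
    obtain ⟨hc, h0, h1, hi, hw⟩ := hedge (f u) (f v) huv
    exact ⟨hc, h0, h1, hi, fun w => hw (f w)⟩
  · intro u v x y huv hxy hne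
    apply hdisj _ _ _ _ huv hxy
    intro hcon
    apply hne
    apply Sym2.map.injective hf
    rw [Sym2.map_pair_eq, Sym2.map_pair_eq]
    exact hcon

lemma degN_comap_le {V W : Type*} [Finite V] (G : SimpleGraph V) (f : W → V)
    (hf : Function.Injective f) (w : W) : degN (G.comap f) w ≤ degN G (f w) := by
  apply Nat.card_le_card_of_injective
    (fun u : {u // (G.comap f).Adj w u} => (⟨f u.1, u.2⟩ : {u // G.Adj (f w) u}))
  intro a b hab
  exact Subtype.ext (hf (congrArg Subtype.val hab))

end Lemmas3
/-- A minimal counterexample does not contain a vertex of degree 3 that is incident to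
two triangular faces and adjacent to a vertex of degree at most `min(10, Δ)`. -/
theorem stmt13 {V : Type*} [Fintype V] [DecidableEq V] (G : SimpleGraph V)
    [DecidableRel G.Adj] (Δ : ℕ) (hΔ : 9 ≤ Δ) (hmin : MinimalCex Δ G)
    (e : PlaneEmbedding G) (hsphere : e.IsSphere) :
    ¬ ∃ (v u : V) (f₁ f₂ : e.Faces), degN G v = 3 ∧ f₁ ≠ f₂ ∧
      e.faceDeg f₁ = 3 ∧ e.faceDeg f₂ = 3 ∧
      e.VertexOnFace v f₁ ∧ e.VertexOnFace v f₂ ∧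
      G.Adj v u ∧ degN G u ≤ min 10 Δ := by
  classical
  rintro ⟨v, u, f₁, f₂, hdeg3, hfne, hfd1, hfd2, hvf1, hvf2, hvu, hdu⟩
  obtain ⟨hplanar, hmax, hchi, hminimal⟩ := hmin
  obtain ⟨a, b, c, hab, hbc, hac, hva, hvb, hvc, hAab, hAbc⟩ :=
    two_edges e v hdeg3 f₁ f₂ hfne hfd1 hfd2 hvf1 hvf2
  set n := Fintype.card {x : V // x ≠ v} with hn_def
  set κ : Fin n ≃ {x : V // x ≠ v} := (Fintype.equivFin {x : V // x ≠ v}).symm with hκ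
  set φ : Fin n → V := fun i => (κ i : V) with hφ_def
  have hφinj : Function.Injective φ := fun i j h => κ.injective (Subtype.ext h)
  set H : SimpleGraph (Fin n) := G.comap φ with hH
  have hφ : ∀ (x : V) (hx : x ≠ v), φ (κ.symm ⟨x, hx⟩) = x := fun x hx =>
    congrArg Subtype.val (κ.apply_symm_apply ⟨x, hx⟩)
  -- apply minimality to the vertex-deleted graph
  have hn : n < Fintype.card V := by
    have h1 : n = Fintype.card V - 1 := by
      rw [hn_def, Fintype.card_subtype_compl, Fintype.card_subtype_eq]
    have h2 : 0 < Fintype.card V := Fintype.card_pos_iff.mpr ⟨v⟩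
    omega
  have hchiH : chi2 H ≤ ((2 * Δ + 7 : ℕ) : ℕ∞) :=
    hminimal n H (isPlanar_comap G φ hφinj hplanar)
      (fun i => (degN_comap_le G φ hφinj i).trans (hmax.1 _)) (Or.inl hn)
  have hcol : H.square.Colorable (2 * Δ + 7) :=
    SimpleGraph.chromaticNumber_le_iff_colorable.mp hchiH
  obtain ⟨c0⟩ := hcol
  set g : V → Fin (2 * Δ + 7) := fun y =>
    if h : y = v then c0 (κ.symm ⟨b, hvb.ne'⟩) else c0 (κ.symm ⟨y, h⟩) with hg
  set S : Finset V := Finset.univ.filter (fun x => G.square.Adj v x) with hS_def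
  -- the neighborhood of v is exactly {a, b, c}
  have hdv : (G.neighborFinset v).card = 3 := by rw [← hdeg3, degN_eq_degree]; rfl
  have hNv : G.neighborFinset v = {a, b, c} := by
    have hsub3 : ({a, b, c} : Finset V) ⊆ G.neighborFinset v := by
      intro y hy
      simp only [Finset.mem_insert, Finset.mem_singleton] at hy
      rw [G.mem_neighborFinset]
      rcases hy with rfl | rfl | rfl
      exacts [hva, hvb, hvc]
    have hcard3 : ({a, b, c} : Finset V).card = 3 := by
      rw [Finset.card_insert_of_notMem (by simp [hab, hac]),
        Finset.card_insert_of_notMem (by simp [hbc]), Finset.card_singleton]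
    exact (Finset.eq_of_subset_of_card_le hsub3 (by omega)).symm
  -- counting the forbidden vertices
  have hS : S ⊆ (G.neighborFinset a \ {v, b}) ∪ (G.neighborFinset b \ {v, a, c}) ∪
      (G.neighborFinset c \ {v, b}) ∪ {a, b, c} := by
    intro x hx
    rw [hS_def, Finset.mem_filter] at hx
    obtain ⟨-, hxv, hcase⟩ := (show _ ∧ _ from ⟨hx.1, (square_adj_iff _ _ _).1 hx.2⟩)
    have hT : x ∈ ({a, b, c} : Finset V) → x ∈ (G.neighborFinset a \ {v, b}) ∪
        (G.neighborFinset b \ {v, a, c}) ∪ (G.neighborFinset c \ {v, b}) ∪ {a, b, c} :=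
      fun h => Finset.mem_union_right _ h
    rcases hcase with h | ⟨w, hvw, hwx⟩
    · exact hT (hNv ▸ (G.mem_neighborFinset v x).mpr h)
    · have hw : w ∈ ({a, b, c} : Finset V) := hNv ▸ (G.mem_neighborFinset v w).mpr hvw
      simp only [Finset.mem_insert, Finset.mem_singleton] at hw
      rcases hw with rfl | rfl | rfl
      · by_cases hxb : x = b
        · exact hT (by simp [hxb])
        · refine Finset.mem_union_left _ (Finset.mem_union_left _ (Finset.mem_union_left _ ?_))
          rw [Finset.mem_sdiff, G.mem_neighborFinset]
          refine ⟨hwx, ?_⟩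
          simp only [Finset.mem_insert, Finset.mem_singleton]
          push_neg
          exact ⟨fun h => hxv h.symm, hxb⟩
      · by_cases hxa : x = a
        · exact hT (by simp [hxa])
        · by_cases hxc : x = c
          · exact hT (by simp [hxc])
          · refine Finset.mem_union_left _ (Finset.mem_union_left _
              (Finset.mem_union_right _ ?_))
            rw [Finset.mem_sdiff, G.mem_neighborFinset]
            refine ⟨hwx, ?_⟩
            simp only [Finset.mem_insert, Finset.mem_singleton]
            push_neg
            exact ⟨fun h => hxv h.symm, hxa, hxc⟩
      · by_cases hxb : x = b
        · exact hT (by simp [hxb])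
        · refine Finset.mem_union_left _ (Finset.mem_union_right _ ?_)
          rw [Finset.mem_sdiff, G.mem_neighborFinset]
          refine ⟨hwx, ?_⟩
          simp only [Finset.mem_insert, Finset.mem_singleton]
          push_neg
          exact ⟨fun h => hxv h.symm, hxb⟩
  have hcardA : (G.neighborFinset a \ {v, b}).card ≤ G.degree a - 2 := by
    have hsub : ({v, b} : Finset V) ⊆ G.neighborFinset a := by
      intro y hy
      simp only [Finset.mem_insert, Finset.mem_singleton] at hy
      rw [G.mem_neighborFinset]
      rcases hy with rfl | rfl
      exacts [hva.symm, hAab]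
    rw [Finset.card_sdiff_of_subset hsub, Finset.card_insert_of_notMem (by simp [hvb.ne]),
      Finset.card_singleton]
    rfl
  have hcardB : (G.neighborFinset b \ {v, a, c}).card ≤ G.degree b - 3 := by
    have hsub : ({v, a, c} : Finset V) ⊆ G.neighborFinset b := by
      intro y hy
      simp only [Finset.mem_insert, Finset.mem_singleton] at hy
      rw [G.mem_neighborFinset]
      rcases hy with rfl | rfl | rfl
      exacts [hvb.symm, hAab.symm, hAbc]
    rw [Finset.card_sdiff_of_subset hsub, Finset.card_insert_of_notMem (by simp [hva.ne, hvc.ne]),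
      Finset.card_insert_of_notMem (by simp [hac]), Finset.card_singleton]
    rfl
  have hcardC : (G.neighborFinset c \ {v, b}).card ≤ G.degree c - 2 := by
    have hsub : ({v, b} : Finset V) ⊆ G.neighborFinset c := by
      intro y hy
      simp only [Finset.mem_insert, Finset.mem_singleton] at hy
      rw [G.mem_neighborFinset]
      rcases hy with rfl | rfl
      exacts [hvc.symm, hAbc.symm]
    rw [Finset.card_sdiff_of_subset hsub, Finset.card_insert_of_notMem (by simp [hvb.ne]),
      Finset.card_singleton]
    rfl
  have hu3 : u ∈ ({a, b, c} : Finset V) := hNv ▸ (G.mem_neighborFinset v u).mpr hvu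
  have hda : G.degree a ≤ Δ := degN_eq_degree (G := G) a ▸ hmax.1 a
  have hdb : G.degree b ≤ Δ := degN_eq_degree (G := G) b ▸ hmax.1 b
  have hdc : G.degree c ≤ Δ := degN_eq_degree (G := G) c ▸ hmax.1 c
  have hdu10 : degN G u ≤ 10 := hdu.trans (min_le_left _ _)
  have hScard : S.card ≤ 2 * Δ + 6 := by
    have h1 := Finset.card_le_card hS
    have h2 := Finset.card_union_le ((G.neighborFinset a \ {v, b}) ∪
      (G.neighborFinset b \ {v, a, c}) ∪ (G.neighborFinset c \ {v, b}))
      ({a, b, c} : Finset V)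
    have h3 := Finset.card_union_le ((G.neighborFinset a \ {v, b}) ∪
      (G.neighborFinset b \ {v, a, c})) (G.neighborFinset c \ {v, b})
    have h4 := Finset.card_union_le (G.neighborFinset a \ {v, b})
      (G.neighborFinset b \ {v, a, c})
    have h5 : ({a, b, c} : Finset V).card ≤ 3 :=
      (Finset.card_insert_le _ _).trans (Nat.succ_le_succ ((Finset.card_insert_le _ _).trans
        (by simp)))
    simp only [Finset.mem_insert, Finset.mem_singleton] at hu3
    rcases hu3 with rfl | rfl | rfl <;>
      [rw [degN_eq_degree] at hdu10; rw [degN_eq_degree] at hdu10;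
        rw [degN_eq_degree] at hdu10] <;> omega
  -- pick a free color for v
  have hfree : ∃ k : Fin (2 * Δ + 7), k ∉ S.image g := by
    by_contra hcon
    push_neg at hcon
    have hsub : (Finset.univ : Finset (Fin (2 * Δ + 7))) ⊆ S.image g := fun k _ => hcon k
    have h1 := Finset.card_le_card hsub
    rw [Finset.card_univ, Fintype.card_fin] at h1
    have h2 := Finset.card_image_le (s := S) (f := g)
    omega
  obtain ⟨k, hk⟩ := hfree
  -- build the coloring of G.square
  have hadj2 : ∀ (x' y' : V) (hx' : x' ≠ v) (hy' : y' ≠ v), G.Adj x' y' →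
      H.Adj (κ.symm ⟨x', hx'⟩) (κ.symm ⟨y', hy'⟩) := by
    intro x' y' hx' hy' hxy
    show G.Adj (φ (κ.symm ⟨x', hx'⟩)) (φ (κ.symm ⟨y', hy'⟩))
    rw [hφ, hφ]
    exact hxy
  have hsqadj : ∀ (x y : V) (hx : x ≠ v) (hy : y ≠ v), G.square.Adj x y →
      H.square.Adj (κ.symm ⟨x, hx⟩) (κ.symm ⟨y, hy⟩) := by
    intro x y hx hy hxy
    obtain ⟨hne, hcase⟩ := (square_adj_iff _ _ _).1 hxy
    refine (square_adj_iff _ _ _).2 ⟨fun h => hne (congrArg Subtype.val (κ.symm.injective h)), ?_⟩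
    rcases hcase with h | ⟨w, hxw, hwy⟩
    · exact Or.inl (hadj2 x y hx hy h)
    · by_cases hwv : w = v
      · subst hwv
        have hxN : x ∈ ({a, b, c} : Finset V) := hNv ▸ (G.mem_neighborFinset w x).mpr hxw.symm
        have hyN : y ∈ ({a, b, c} : Finset V) := hNv ▸ (G.mem_neighborFinset w y).mpr hwy
        simp only [Finset.mem_insert, Finset.mem_singleton] at hxN hyN
        rcases hxN with rfl | rfl | rfl <;> rcases hyN with rfl | rfl | rfl
        · exact absurd rfl hne
        · exact Or.inl (hadj2 _ _ hx hy hAab)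
        · exact Or.inr ⟨κ.symm ⟨b, hvb.ne'⟩, hadj2 _ _ hx hvb.ne' hAab,
            hadj2 _ _ hvb.ne' hy hAbc⟩
        · exact Or.inl (hadj2 _ _ hx hy hAab.symm)
        · exact absurd rfl hne
        · exact Or.inl (hadj2 _ _ hx hy hAbc)
        · exact Or.inr ⟨κ.symm ⟨b, hvb.ne'⟩, hadj2 _ _ hx hvb.ne' hAbc.symm,
            hadj2 _ _ hvb.ne' hy hAab.symm⟩
        · exact Or.inl (hadj2 _ _ hx hy hAbc.symm)
        · exact absurd rfl hne
      · exact Or.inr ⟨κ.symm ⟨w, hwv⟩, hadj2 _ _ hx hwv hxw, hadj2 _ _ hwv hy hwy⟩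
  set C : V → Fin (2 * Δ + 7) := fun y => if y = v then k else g y with hC
  have hgmem : ∀ x : V, G.square.Adj v x → g x ∈ S.image g := by
    intro x hx
    exact Finset.mem_image_of_mem g (by rw [hS_def, Finset.mem_filter]; exact ⟨Finset.mem_univ _, hx⟩)
  have hgval : ∀ (x : V) (hx : ¬ x = v), g x = c0 (κ.symm ⟨x, hx⟩) := by
    intro x hx
    simp [hg, hx]
  have hCv : C v = k := by
    simp [hC]
  have hCne : ∀ (x : V), ¬ x = v → C x = g x := by
    intro x hx
    simp [hC, hx]
  have hproper : ∀ {x y : V}, G.square.Adj x y → C x ≠ C y := by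
    intro x y hxy
    by_cases hx : x = v
    · have hyv : ¬ y = v := fun h => ((square_adj_iff _ _ _).1 hxy).1 (hx.trans h.symm)
      rw [hx, hCv, hCne y hyv]
      intro h
      apply hk
      rw [h]
      exact hgmem y (hx ▸ hxy)
    · by_cases hy : y = v
      · rw [hy, hCv, hCne x hx]
        intro h
        apply hk
        rw [← h]
        exact hgmem x (hy ▸ hxy.symm)
      · rw [hCne x hx, hCne y hy, hgval x hx, hgval y hy]
        exact c0.valid (hsqadj x y hx hy hxy)
  have hcolG : G.square.Colorable (2 * Δ + 7) := ⟨SimpleGraph.Coloring.mk C hproper⟩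
  have hle : chi2 G ≤ ((2 * Δ + 7 : ℕ) : ℕ∞) := hcolG.chromaticNumber_le
  exact absurd hchi (not_lt.mpr hle)
end
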